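/- (GCP upper sandwich bound) Let ν₁, ν₂, … be log-concave probability mass functions on ℕ, λ* ∈ (1, λ^max), Rₙ* = E[Sₙ^{λ*}]. Then for any λ ∈ (λ*, λ^max), n ≥ ℓ, the conditional law of (X₁,…,X_ℓ) given {Sₙ > Rₙ*} is stochastically dominated by the conditional law of (X₁^λ,…,X_ℓ^λ) given {Sₙ^λ > Rₙ*}. -/

import Mathlib

open scoped BigOperators
open scoped Classical

/-- The `l`-tilted measure of a pmf `ν` on `ℕ`. -/
noncomputable def tilt (ν : ℕ → ℝ) (l : ℝ) (x : ℕ) : ℝ :=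
  l ^ x * ν x / (∑' y : ℕ, l ^ y * ν y)

/-- A log-concave probability mass function on `ℕ`. -/
def LogConcavePMF (ν : ℕ → ℝ) : Prop :=
  (∀ x, 0 ≤ ν x) ∧
  (∀ x y : ℕ, x ≤ y → 0 < ν y → 0 < ν x) ∧
  (∀ x : ℕ, ν x * ν (x + 2) ≤ ν (x + 1) ^ 2)

/-- Law of `(X₁,…,X_ℓ)` (marginals `μ i`, independent) conditioned on
`{X₁+⋯+Xₙ > R}`, for `ℓ ≤ n`. -/
noncomputable def condMarginal (μ : ℕ → ℕ → ℝ) (ℓ n : ℕ) (h : ℓ ≤ n) (R : ℝ)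
    (v : Fin ℓ → ℕ) : ℝ :=
  (∑' x : Fin n → ℕ,
      if (∀ i : Fin ℓ, x (Fin.castLE h i) = v i) ∧ R < ((∑ i, x i : ℕ) : ℝ)
      then ∏ i : Fin n, μ i (x i) else 0) /
    (∑' x : Fin n → ℕ,
      if R < ((∑ i, x i : ℕ) : ℝ) then ∏ i : Fin n, μ i (x i) else 0)

/-- Stochastic domination in the coordinatewise order on `ℕ^ℓ`. -/
def StochDom {ℓ : ℕ} (p q : (Fin ℓ → ℕ) → ℝ) : Prop :=
  ∀ f : (Fin ℓ → ℕ) → ℝ, Monotone f → (∃ C, ∀ x, |f x| ≤ C) →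
    (∑' x, f x * p x) ≤ ∑' x, f x * q x

namespace GCP


/-- nonneg, downward-closed support, log-concave -/
def LC (ν : ℕ → ℝ) : Prop :=
  (∀ x, 0 ≤ ν x) ∧ (∀ x y : ℕ, x ≤ y → 0 < ν y → 0 < ν x) ∧
  (∀ x : ℕ, ν x * ν (x + 2) ≤ ν (x + 1) ^ 2)

lemma LC.cross {ν : ℕ → ℝ} (h : LC ν) :
    ∀ a c : ℕ, a ≤ c → ν a * ν (c + 1) ≤ ν (a + 1) * ν c := by
  obtain ⟨h0, hdown, hlc⟩ := h
  intro a c hac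
  induction c, hac using Nat.le_induction with
  | base => exact le_of_eq (mul_comm _ _)
  | succ c hac ih =>
    rcases eq_or_lt_of_le (h0 (c+1)) with hz | hpos
    · have hz2 : ν (c + 2) = 0 := by
        by_contra hne
        have : 0 < ν (c+2) := lt_of_le_of_ne (h0 _) (Ne.symm hne)
        have := hdown (c+1) (c+2) (by omega) this
        rw [← hz] at this; exact lt_irrefl _ this
      rw [hz2]
      have := mul_nonneg (h0 (a+1)) (h0 (c+1))
      simpa using this
    · have h1 : ν a * ν (c + 1) * ν (c+2) ≤ ν (a + 1) * ν c * ν (c+2) :=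
        mul_le_mul_of_nonneg_right ih (h0 _)
      have h2 : ν c * ν (c+2) ≤ ν (c+1)^2 := hlc c
      have h3 : ν (a+1) * (ν c * ν (c+2)) ≤ ν (a+1) * ν (c+1)^2 :=
        mul_le_mul_of_nonneg_left h2 (h0 _)
      have key : ν a * ν (c+2) * ν (c+1) ≤ ν (a+1) * ν (c+1) * ν (c+1) := by nlinarith
      exact le_of_mul_le_mul_right key hpos

lemma LC.down {ν : ℕ → ℝ} (h : LC ν) {t : ℕ} (ht : ν (t+1) ≠ 0) : 0 < ν t :=
  h.2.1 t (t+1) (by omega) (lt_of_le_of_ne (h.1 _) (Ne.symm ht))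

/-- the set of `x : Fin n → ℕ` with `∑ x = s`. -/
noncomputable def levelFinset (n s : ℕ) : Finset (Fin n → ℕ) :=
  (Fintype.piFinset fun _ => Finset.range (s+1)).filter (fun x => ∑ i, x i = s)

lemma mem_levelFinset {n s : ℕ} {x : Fin n → ℕ} :
    x ∈ levelFinset n s ↔ ∑ i, x i = s := by
  constructor
  · intro hx; exact (Finset.mem_filter.mp hx).2
  · intro hx
    refine Finset.mem_filter.mpr ⟨?_, hx⟩
    refine Fintype.mem_piFinset.mpr (fun i => ?_)
    have : x i ≤ s := by
      rw [← hx]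
      exact Finset.single_le_sum (f := fun j => x j) (fun j _ => Nat.zero_le _)
        (Finset.mem_univ i)
    exact Finset.mem_range.mpr (by omega)

noncomputable def lineSum : (n : ℕ) → (Fin n → ℕ → ℝ) → ((Fin n → ℕ) → ℝ) → ℕ → ℝ
  | 0, _, F, s => if s = 0 then F (fun i => i.elim0) else 0
  | n+1, ν, F, s => ∑ k ∈ Finset.range (s+1),
      ν (Fin.last n) k *
        lineSum n (fun i => ν i.castSucc) (fun y => F (Fin.snoc y k)) (s - k)

lemma lineSum_eq_sum (n : ℕ) (ν : Fin n → ℕ → ℝ) (F : (Fin n → ℕ) → ℝ) (s : ℕ) :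
    lineSum n ν F s = ∑ x ∈ levelFinset n s, F x * ∏ i, ν i (x i) := by
  induction n generalizing s with
  | zero =>
    rcases eq_or_ne s 0 with rfl | hs
    · have : levelFinset 0 0 = {fun i => i.elim0} := by
        apply Finset.ext; intro x
        simp only [mem_levelFinset, Finset.mem_singleton]
        constructor
        · intro _; funext i; exact i.elim0
        · intro h; simp
      simp [lineSum, this]
    · have : levelFinset 0 s = ∅ := by
        apply Finset.ext; intro x
        simp only [mem_levelFinset, Finset.notMem_empty, iff_false]
        simpa using (Ne.symm hs)
      simp [lineSum, this, hs]
  | succ n ih =>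
    show (∑ k ∈ Finset.range (s+1), ν (Fin.last n) k *
        lineSum n (fun i => ν i.castSucc) (fun y => F (Fin.snoc y k)) (s - k)) = _
    have hins : ∀ k ∈ Finset.range (s+1),
        ν (Fin.last n) k * lineSum n (fun i => ν i.castSucc)
            (fun y => F (Fin.snoc y k)) (s - k)
        = ∑ y ∈ levelFinset n (s - k),
            F (Fin.snoc y k) * ∏ i : Fin (n+1), ν i ((Fin.snoc y k : Fin (n+1) → ℕ) i) := by
      intro k _
      rw [ih, Finset.mul_sum]
      refine Finset.sum_congr rfl (fun y _ => ?_)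
      rw [Fin.prod_univ_castSucc]
      simp only [Fin.snoc_castSucc, Fin.snoc_last]
      ring
    rw [Finset.sum_congr rfl hins]
    rw [Finset.sum_sigma']
    refine Finset.sum_nbij' (fun p => Fin.snoc p.2 p.1)
      (fun x => ⟨x (Fin.last n), Fin.init x⟩) ?_ ?_ ?_ ?_ ?_
    · rintro ⟨k, y⟩ hp
      simp only [Finset.mem_sigma, Finset.mem_range, mem_levelFinset] at hp
      obtain ⟨hk, hy⟩ := hp
      rw [mem_levelFinset, Fin.sum_univ_castSucc]
      simp only [Fin.snoc_castSucc, Fin.snoc_last]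
      omega
    · intro x hx
      rw [mem_levelFinset] at hx
      simp only [Finset.mem_sigma, Finset.mem_range, mem_levelFinset]
      have hsum : (∑ i : Fin n, Fin.init x i) + x (Fin.last n) = s := by
        rw [← hx, Fin.sum_univ_castSucc]; rfl
      constructor
      · omega
      · omega
    · rintro ⟨k, y⟩ _
      ext1
      · simp [Fin.snoc_last]
      · simp [Fin.init_snoc]
    · intro x _
      exact Fin.snoc_init_self x
    · rintro ⟨k, y⟩ _
      rfl

lemma lineSum_nonneg {n : ℕ} {ν : Fin n → ℕ → ℝ} {F : (Fin n → ℕ) → ℝ}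
    (hν : ∀ i x, 0 ≤ ν i x) (hF : ∀ x, 0 ≤ F x) (s : ℕ) :
    0 ≤ lineSum n ν F s := by
  rw [lineSum_eq_sum]
  exact Finset.sum_nonneg fun x _ =>
    mul_nonneg (hF x) (Finset.prod_nonneg fun i _ => hν i _)

lemma lineSum_mono {n : ℕ} {ν : Fin n → ℕ → ℝ} {F G : (Fin n → ℕ) → ℝ}
    (hν : ∀ i x, 0 ≤ ν i x) (hFG : ∀ x, F x ≤ G x) (s : ℕ) :
    lineSum n ν F s ≤ lineSum n ν G s := by
  rw [lineSum_eq_sum, lineSum_eq_sum]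
  exact Finset.sum_le_sum fun x _ =>
    mul_le_mul_of_nonneg_right (hFG x) (Finset.prod_nonneg fun i _ => hν i _)

lemma lineSum_zero {n : ℕ} {ν : Fin n → ℕ → ℝ} {F : (Fin n → ℕ) → ℝ}
    (hν : ∀ i x, 0 ≤ ν i x) (hF : ∀ x, 0 ≤ F x) (s : ℕ)
    (h : lineSum n ν (fun _ => 1) s = 0) : lineSum n ν F s = 0 := by
  rw [lineSum_eq_sum] at h ⊢
  have hterm : ∀ x ∈ levelFinset n s, (fun x => (1:ℝ)) x * ∏ i, ν i (x i) = 0 := by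
    rw [← Finset.sum_eq_zero_iff_of_nonneg]
    · exact h
    · intro x _; exact mul_nonneg zero_le_one (Finset.prod_nonneg fun i _ => hν i _)
  refine Finset.sum_eq_zero fun x hx => ?_
  have := hterm x hx
  simp only [one_mul] at this
  rw [this, mul_zero]




lemma antisym_pair_sum {J : Finset ℕ} (G : ℕ → ℕ → ℝ)
    (hpair : ∀ m ∈ J, ∀ m' ∈ J, G m m' + G m' m ≤ 0) :
    ∑ m ∈ J, ∑ m' ∈ J, G m m' ≤ 0 := by
  have h2 : (∑ m ∈ J, ∑ m' ∈ J, G m m') + (∑ m ∈ J, ∑ m' ∈ J, G m m') ≤ 0 := by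
    nth_rewrite 2 [Finset.sum_comm]
    rw [← Finset.sum_add_distrib]
    refine Finset.sum_nonpos fun m hm => ?_
    rw [← Finset.sum_add_distrib]
    exact Finset.sum_nonpos fun m' hm' => hpair m hm m' hm'
  linarith

lemma pos_of_mul_pos_nonneg {a b : ℝ} (ha : 0 ≤ a) (hb : 0 ≤ b) (h : a * b ≠ 0) :
    0 < a ∧ 0 < b := by
  constructor
  · rcases eq_or_lt_of_le ha with h' | h'
    · exact absurd (by rw [← h', zero_mul]) h
    · exact h'
  · rcases eq_or_lt_of_le hb with h' | h'
    · exact absurd (by rw [← h', mul_zero]) h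
    · exact h'

lemma conv_LC {μ B : ℕ → ℝ} (hμ : LC μ) (hB : LC B) :
    LC (fun t => ∑ k ∈ Finset.range (t+1), μ k * B (t - k)) := by
  have hμ0 := hμ.1; have hB0 := hB.1
  refine ⟨?_, ?_, ?_⟩
  · intro t
    exact Finset.sum_nonneg fun k _ => mul_nonneg (hμ0 k) (hB0 _)
  · intro x y hxy hy
    simp only at hy ⊢
    have hex : ∃ k ∈ Finset.range (y+1), μ k * B (y - k) ≠ 0 := by
      by_contra hall
      push_neg at hall
      rw [Finset.sum_eq_zero hall] at hy
      exact lt_irrefl _ hy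
    obtain ⟨k, _, hne⟩ := hex
    obtain ⟨hkpos, hBpos⟩ := pos_of_mul_pos_nonneg (hμ0 k) (hB0 _) hne
    set k' := min k x with hk'
    have hμk' : 0 < μ k' := hμ.2.1 k' k (min_le_left _ _) hkpos
    have hBk' : 0 < B (x - k') := hB.2.1 _ (y - k) (by omega) hBpos
    calc (0:ℝ) < μ k' * B (x - k') := mul_pos hμk' hBk'
    _ ≤ ∑ k ∈ Finset.range (x+1), μ k * B (x - k) :=
        Finset.single_le_sum (fun j _ => mul_nonneg (hμ0 j) (hB0 _))
          (Finset.mem_range.mpr (by omega))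
  · intro t
    set c : ℕ → ℝ := fun z => ∑ k ∈ Finset.range (z+1), μ k * B (z - k) with hcdef
    show c t * c (t+2) ≤ c (t+1) ^ 2
    set a0 : ℕ → ℝ := fun m => if m = 0 then 0 else μ (m-1) with ha0
    set Bz : ℕ → ℕ → ℝ := fun z m => if m ≤ z + 1 then B (z + 1 - m) else 0 with hBzdef
    have ha0nn : ∀ m, 0 ≤ a0 m := by
      intro m; rw [ha0]; dsimp only; split
      · exact le_refl 0
      · exact hμ0 _
    have hBznn : ∀ z m, 0 ≤ Bz z m := by
      intro z m; rw [hBzdef]; dsimp only; split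
      · exact hB0 _
      · exact le_refl 0
    have a0cross : ∀ u v : ℕ, u ≤ v → a0 u * a0 (v+1) ≤ a0 (u+1) * a0 v := by
      intro u v huv
      match u, huv with
      | 0, _ =>
        have h1 : a0 0 = 0 := by simp [ha0]
        rw [h1, zero_mul]
        exact mul_nonneg (ha0nn 1) (ha0nn v)
      | u+1, huv =>
        match v, huv with
        | v+1, huv =>
          have e1 : a0 (u+1) = μ u := by simp [ha0]
          have e2 : a0 (v+1+1) = μ (v+1) := by simp [ha0]
          have e3 : a0 (u+1+1) = μ (u+1) := by simp [ha0]
          have e4 : a0 (v+1) = μ v := by simp [ha0]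
          rw [e1, e2, e3, e4]
          exact hμ.cross u v (by omega)
    have Bzfact : ∀ m m' : ℕ, m < m' →
        0 ≤ Bz t m * Bz (t+1) m' - Bz (t+1) m * Bz t m' := by
      intro m m' hmm'
      rcases le_or_gt m' (t+1) with h1 | h1
      · have e1 : Bz t m = B (t+1-m) := by
          rw [hBzdef]; dsimp only; rw [if_pos (by omega)]
        have e2 : Bz (t+1) m' = B (t+2-m') := by
          rw [hBzdef]; dsimp only; rw [if_pos (by omega)]
        have e3 : Bz (t+1) m = B (t+2-m) := by
          rw [hBzdef]; dsimp only; rw [if_pos (by omega)]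
        have e4 : Bz t m' = B (t+1-m') := by
          rw [hBzdef]; dsimp only; rw [if_pos (by omega)]
        rw [e1, e2, e3, e4]
        have hcross := hB.cross (t+1-m') (t+1-m) (by omega)
        have ea : t+1-m'+1 = t+2-m' := by omega
        have eb : t+1-m+1 = t+2-m := by omega
        rw [ea, eb] at hcross
        linarith
      · rcases eq_or_lt_of_le (by omega : t+2 ≤ m') with h2 | h2
        · have e1 : Bz t m' = 0 := by
            rw [hBzdef]; dsimp only; rw [if_neg (by omega)]
          have e2 : Bz (t+1) m' = B 0 := by
            rw [hBzdef]; dsimp only; rw [if_pos (by omega)]; congr 1; omega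
          rw [e1, e2, mul_zero]
          have := mul_nonneg (hBznn t m) (hB0 0)
          linarith
        · have e1 : Bz t m' = 0 := by
            rw [hBzdef]; dsimp only; rw [if_neg (by omega)]
          have e2 : Bz (t+1) m' = 0 := by
            rw [hBzdef]; dsimp only; rw [if_neg (by omega)]
          rw [e1, e2, mul_zero, mul_zero]
          simp
    set J := Finset.range (t+3) with hJ
    set M : ℕ → ℕ → ℝ := fun i z => ∑ m ∈ J, a0 (m+i) * Bz z m with hM
    have key : ∀ z : ℕ, z ≤ t+1 → ∀ i : ℕ, i ≤ 1 → M i z = c (z + i) := by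
      intro z hz i hi
      rw [hM]; dsimp only
      have step : ∀ m ∈ J, a0 (m+i) * Bz z m
          = if m + i ≥ 1 ∧ m ≤ z+1 then μ (m+i-1) * B (z+1-m) else 0 := by
        intro m _
        rw [ha0, hBzdef]; dsimp only
        by_cases h1 : m + i = 0
        · rw [if_pos h1, zero_mul, if_neg (by omega)]
        · rw [if_neg h1]
          by_cases h2 : m ≤ z+1
          · rw [if_pos h2, if_pos (by omega)]
          · rw [if_neg h2, mul_zero, if_neg (by omega)]
      rw [Finset.sum_congr rfl step, ← Finset.sum_filter]
      rw [hcdef]; dsimp only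
      refine Finset.sum_nbij' (fun m => m + i - 1) (fun k => k + 1 - i) ?_ ?_ ?_ ?_ ?_
      · intro m hm
        simp only [Finset.mem_filter, hJ, Finset.mem_range] at hm
        simp only [Finset.mem_range]
        omega
      · intro k hk
        simp only [Finset.mem_range] at hk
        simp only [Finset.mem_filter, hJ, Finset.mem_range]
        omega
      · intro m hm
        simp only [Finset.mem_filter, hJ, Finset.mem_range] at hm
        omega
      · intro k hk
        simp only [Finset.mem_range] at hk
        omega
      · intro m hm
        simp only [Finset.mem_filter, hJ, Finset.mem_range] at hm
        congr 2
        omega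
    set G : ℕ → ℕ → ℝ := fun m m' => a0 m * Bz t m * (a0 (m'+1) * Bz (t+1) m')
      - a0 m * Bz (t+1) m * (a0 (m'+1) * Bz t m') with hG
    have hexpand : M 0 t * M 1 (t+1) - M 0 (t+1) * M 1 t = ∑ m ∈ J, ∑ m' ∈ J, G m m' := by
      rw [hM]; dsimp only
      rw [Finset.sum_mul_sum, Finset.sum_mul_sum, ← Finset.sum_sub_distrib]
      refine Finset.sum_congr rfl fun m _ => ?_
      rw [← Finset.sum_sub_distrib]
      refine Finset.sum_congr rfl fun m' _ => ?_
      rw [hG]; ring_nf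
    have hfinal : M 0 t * M 1 (t+1) - M 0 (t+1) * M 1 t ≤ 0 := by
      rw [hexpand]
      refine antisym_pair_sum G fun m hm m' hm' => ?_
      rcases lt_trichotomy m m' with h | h | h
      · have e : G m m' + G m' m = (a0 m * a0 (m'+1) - a0 m' * a0 (m+1)) *
            (Bz t m * Bz (t+1) m' - Bz (t+1) m * Bz t m') := by rw [hG]; ring
        rw [e]
        exact mul_nonpos_of_nonpos_of_nonneg (by linarith [a0cross m m' (le_of_lt h)])
          (Bzfact m m' h)
      · subst h
        have e : G m m + G m m = 0 := by rw [hG]; ring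
        rw [e]
      · have e : G m m' + G m' m = (a0 m' * a0 (m+1) - a0 m * a0 (m'+1)) *
            (Bz t m' * Bz (t+1) m - Bz (t+1) m' * Bz t m) := by rw [hG]; ring
        rw [e]
        exact mul_nonpos_of_nonpos_of_nonneg (by linarith [a0cross m' m (le_of_lt h)])
          (Bzfact m' m h)
    have e1 := key t (by omega) 0 (by omega)
    have e2 := key (t+1) (by omega) 1 (by omega)
    have e3 := key (t+1) (by omega) 0 (by omega)
    have e4 := key t (by omega) 1 (by omega)
    rw [e1, e2, e3, e4] at hfinal
    have h20 : c (t+0) = c t := by norm_num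
    have h21 : c (t+1+0) = c (t+1) := by norm_num
    have h22 : c (t+1+1) = c (t+2) := by norm_num
    rw [h20, h21, h22] at hfinal
    nlinarith [hfinal]



noncomputable def cdf (α : ℕ → ℝ) (x : ℕ) : ℝ := ∑ u ∈ Finset.range x, α u

lemma cdf_mono {α : ℕ → ℝ} (hα0 : ∀ k, 0 ≤ α k) : Monotone (cdf α) := by
  intro x y hxy
  exact Finset.sum_le_sum_of_subset_of_nonneg (Finset.range_subset_range.mpr hxy)
    (fun k _ _ => hα0 k)

lemma cdf_zero (α : ℕ → ℝ) : cdf α 0 = 0 := by simp [cdf]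

lemma cdf_nonneg {α : ℕ → ℝ} (hα0 : ∀ k, 0 ≤ α k) (x : ℕ) : 0 ≤ cdf α x :=
  Finset.sum_nonneg fun k _ => hα0 k

lemma cdf_succ (α : ℕ → ℝ) (x : ℕ) : cdf α (x+1) = cdf α x + α x :=
  Finset.sum_range_succ α x

lemma cdf_eq_one {N : ℕ} {α : ℕ → ℝ}
    (hαs : ∀ k, N < k → α k = 0) (hα1 : ∑ k ∈ Finset.range (N+1), α k = 1)
    {m : ℕ} (hm : N + 1 ≤ m) : cdf α m = 1 := by
  rw [cdf, Finset.range_eq_Ico,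
    ← Finset.sum_Ico_consecutive α (Nat.zero_le (N+1)) hm]
  rw [← Finset.range_eq_Ico] at *
  rw [hα1]
  have : ∑ i ∈ Finset.Ico (N+1) m, α i = 0 :=
    Finset.sum_eq_zero fun k hk => hαs k (by
      have := (Finset.mem_Ico.mp hk).1; omega)
  rw [this, add_zero]

lemma cdf_le_one {N : ℕ} {α : ℕ → ℝ} (hα0 : ∀ k, 0 ≤ α k)
    (hαs : ∀ k, N < k → α k = 0) (hα1 : ∑ k ∈ Finset.range (N+1), α k = 1)
    (m : ℕ) : cdf α m ≤ 1 := by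
  rcases le_or_gt (N+1) m with h | h
  · exact le_of_eq (cdf_eq_one hαs hα1 h)
  · calc cdf α m ≤ cdf α (N+1) := cdf_mono hα0 (by omega)
    _ = 1 := cdf_eq_one hαs hα1 (le_refl _)

lemma tele_term (G : ℕ → ℝ) (hG : Monotone G) (A Bd : ℝ) (y : ℕ) :
    max 0 (min A (G (y+1)) - max Bd (G y)) =
      max 0 (min A (G (y+1)) - Bd) - max 0 (min A (G y) - Bd) := by
  have hGy : G y ≤ G (y+1) := hG (by omega)
  rcases le_or_gt (G y) Bd with h | h
  · have hd : min A (G y) ≤ Bd := le_trans (min_le_right _ _) h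
    rw [max_eq_left h]
    have h2 : max 0 (min A (G y) - Bd) = 0 := max_eq_left (by linarith)
    rw [h2, sub_zero]
  · rw [max_eq_right (le_of_lt h)]
    rcases le_or_gt A (G y) with h2 | h2
    · have hmy : min A (G y) = A := min_eq_left h2
      have hmy1 : min A (G (y+1)) = A := min_eq_left (le_trans h2 hGy)
      rw [hmy, hmy1]
      have h3 : max 0 (A - G y) = 0 := max_eq_left (by linarith)
      rw [h3, sub_self]
    · have hmy : min A (G y) = G y := min_eq_right (le_of_lt h2)
      rw [hmy]
      have hc : G y ≤ min A (G (y+1)) := le_min (le_of_lt h2) hGy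
      rw [max_eq_right (by linarith : (0:ℝ) ≤ min A (G (y+1)) - G y),
        max_eq_right (by linarith : (0:ℝ) ≤ min A (G (y+1)) - Bd),
        max_eq_right (by linarith : (0:ℝ) ≤ G y - Bd)]
      ring

lemma tele_sum (G : ℕ → ℝ) (hG : Monotone G) (A Bd : ℝ) (hBA : Bd ≤ A)
    (h0 : G 0 ≤ Bd) (M : ℕ) (hM : A ≤ G M) :
    ∑ y ∈ Finset.range M, max 0 (min A (G (y+1)) - max Bd (G y)) = A - Bd := by
  rw [Finset.sum_congr rfl (fun y _ => tele_term G hG A Bd y)]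
  rw [Finset.sum_range_sub (fun y => max 0 (min A (G y) - Bd))]
  have e1 : min A (G M) = A := min_eq_left hM
  have e2 : min A (G 0) ≤ Bd := le_trans (min_le_right _ _) h0
  rw [e1, max_eq_right (by linarith), max_eq_left (by linarith), sub_zero]

lemma coupling_exp_le (N : ℕ) (α β : ℕ → ℝ) (φ ψ : ℕ → ℝ)
    (hα0 : ∀ k, 0 ≤ α k) (hβ0 : ∀ k, 0 ≤ β k)
    (hαs : ∀ k, N < k → α k = 0) (hβs : ∀ k, N < k → β k = 0)
    (hα1 : ∑ k ∈ Finset.range (N+1), α k = 1)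
    (hβ1 : ∑ k ∈ Finset.range (N+1), β k = 1)
    (hd1 : ∀ x, cdf β x ≤ cdf α x)
    (hd2 : ∀ x, cdf α (x+1) ≤ cdf β (x+2))
    (hpsi : ∀ x, 0 < α x →
      ((0 < β x → φ x ≤ ψ x) ∧ (0 < β (x+1) → φ x ≤ ψ (x+1)))) :
    ∑ k ∈ Finset.range (N+1), α k * φ k ≤ ∑ k ∈ Finset.range (N+1), β k * ψ k := by
  set π : ℕ → ℕ → ℝ := fun x y =>
    max 0 (min (cdf α (x+1)) (cdf β (y+1)) - max (cdf α x) (cdf β y)) with hπ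
  have hπ0 : ∀ x y, 0 ≤ π x y := fun x y => le_max_left _ _
  have marg1 : ∀ x, ∑ y ∈ Finset.range (N+2), π x y = α x := by
    intro x
    rw [hπ]
    have := tele_sum (cdf β) (cdf_mono hβ0) (cdf α (x+1)) (cdf α x)
      (cdf_mono hα0 (by omega)) (by rw [cdf_zero]; exact cdf_nonneg hα0 x) (N+2)
      (by rw [cdf_eq_one hβs hβ1 (by omega : N+1 ≤ N+2)]
          exact cdf_le_one hα0 hαs hα1 (x+1))
    dsimp only
    rw [this, cdf_succ]; ring
  have marg2 : ∀ y, ∑ x ∈ Finset.range (N+2), π x y = β y := by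
    intro y
    have hsym : ∀ x, π x y =
        max 0 (min (cdf β (y+1)) (cdf α (x+1)) - max (cdf β y) (cdf α x)) := by
      intro x; rw [hπ]; dsimp only; rw [min_comm, max_comm (cdf α x)]
    rw [Finset.sum_congr rfl (fun x _ => hsym x)]
    have := tele_sum (cdf α) (cdf_mono hα0) (cdf β (y+1)) (cdf β y)
      (cdf_mono hβ0 (by omega)) (by rw [cdf_zero]; exact cdf_nonneg hβ0 y) (N+2)
      (by rw [cdf_eq_one hαs hα1 (by omega : N+1 ≤ N+2)]
          exact cdf_le_one hβ0 hβs hβ1 (y+1))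
    rw [this, cdf_succ]; ring
  have πleα : ∀ x y, π x y ≤ α x := by
    intro x y
    rw [hπ]; dsimp only
    rcases max_cases (0:ℝ) (min (cdf α (x+1)) (cdf β (y+1)) - max (cdf α x) (cdf β y))
      with ⟨he, _⟩ | ⟨he, _⟩
    · rw [he]; exact hα0 x
    · rw [he]
      have h1 : min (cdf α (x+1)) (cdf β (y+1)) ≤ cdf α (x+1) := min_le_left _ _
      have h2 : cdf α x ≤ max (cdf α x) (cdf β y) := le_max_left _ _
      have := cdf_succ α x
      linarith
  have πleβ : ∀ x y, π x y ≤ β y := by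
    intro x y
    rw [hπ]; dsimp only
    rcases max_cases (0:ℝ) (min (cdf α (x+1)) (cdf β (y+1)) - max (cdf α x) (cdf β y))
      with ⟨he, _⟩ | ⟨he, _⟩
    · rw [he]; exact hβ0 y
    · rw [he]
      have h1 : min (cdf α (x+1)) (cdf β (y+1)) ≤ cdf β (y+1) := min_le_right _ _
      have h2 : cdf β y ≤ max (cdf α x) (cdf β y) := le_max_right _ _
      have := cdf_succ β y
      linarith
  have πsupp : ∀ x y, 0 < π x y → (y = x ∨ y = x + 1) := by
    intro x y hpos
    rw [hπ] at hpos; dsimp only at hpos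
    have hE : max (cdf α x) (cdf β y) < min (cdf α (x+1)) (cdf β (y+1)) := by
      by_contra hc
      push_neg at hc
      rw [max_eq_left (by linarith)] at hpos
      exact lt_irrefl _ hpos
    by_contra hc
    push_neg at hc
    obtain ⟨h1, h2⟩ := hc
    rcases lt_or_gt_of_ne h1 with hy | hy
    · -- y < x, so y + 1 ≤ x
      have : cdf β (y+1) ≤ cdf α x :=
        le_trans (hd1 (y+1)) (cdf_mono hα0 (by omega))
      have l1 : min (cdf α (x+1)) (cdf β (y+1)) ≤ cdf β (y+1) := min_le_right _ _
      have l2 : cdf α x ≤ max (cdf α x) (cdf β y) := le_max_left _ _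
      linarith
    · -- y > x and y ≠ x+1, so y ≥ x+2
      have : cdf α (x+1) ≤ cdf β y :=
        le_trans (hd2 x) (cdf_mono hβ0 (by omega))
      have l1 : min (cdf α (x+1)) (cdf β (y+1)) ≤ cdf α (x+1) := min_le_left _ _
      have l2 : cdf β y ≤ max (cdf α x) (cdf β y) := le_max_right _ _
      linarith
  have πφψ : ∀ x y, π x y * φ x ≤ π x y * ψ y := by
    intro x y
    rcases eq_or_lt_of_le (hπ0 x y) with he | hpos
    · rw [← he, zero_mul, zero_mul]
    · have hαx : 0 < α x := lt_of_lt_of_le hpos (πleα x y)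
      have hβy : 0 < β y := lt_of_lt_of_le hpos (πleβ x y)
      have hfle : φ x ≤ ψ y := by
        rcases πsupp x y hpos with h | h
        · subst h; exact (hpsi y hαx).1 hβy
        · subst h; exact (hpsi x hαx).2 hβy
      exact mul_le_mul_of_nonneg_left hfle (le_of_lt hpos)
  have ext1 : ∑ k ∈ Finset.range (N+1), α k * φ k
      = ∑ k ∈ Finset.range (N+2), α k * φ k := by
    rw [Finset.sum_range_succ (fun k => α k * φ k) (N+1)]
    rw [hαs (N+1) (by omega), zero_mul, add_zero]
  have ext2 : ∑ k ∈ Finset.range (N+1), β k * ψ k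
      = ∑ k ∈ Finset.range (N+2), β k * ψ k := by
    rw [Finset.sum_range_succ (fun k => β k * ψ k) (N+1)]
    rw [hβs (N+1) (by omega), zero_mul, add_zero]
  rw [ext1, ext2]
  calc ∑ x ∈ Finset.range (N+2), α x * φ x
      = ∑ x ∈ Finset.range (N+2), ∑ y ∈ Finset.range (N+2), π x y * φ x := by
        refine Finset.sum_congr rfl fun x _ => ?_
        rw [← Finset.sum_mul, marg1]
    _ ≤ ∑ x ∈ Finset.range (N+2), ∑ y ∈ Finset.range (N+2), π x y * ψ y :=
        Finset.sum_le_sum fun x _ => Finset.sum_le_sum fun y _ => πφψ x y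
    _ = ∑ y ∈ Finset.range (N+2), β y * ψ y := by
        rw [Finset.sum_comm]
        refine Finset.sum_congr rfl fun y _ => ?_
        rw [← Finset.sum_mul, marg2]

lemma cdf_dom {N : ℕ} {α β : ℕ → ℝ}
    (hα0 : ∀ k, 0 ≤ α k) (hβ0 : ∀ k, 0 ≤ β k)
    (hαs : ∀ k, N < k → α k = 0) (hβs : ∀ k, N < k → β k = 0)
    (hα1 : ∑ k ∈ Finset.range (N+1), α k = 1)
    (hβ1 : ∑ k ∈ Finset.range (N+1), β k = 1)
    (LR1 : ∀ x y, x ≤ y → β x * α y ≤ α x * β y) :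
    ∀ x, cdf β x ≤ cdf α x := by
  intro x
  rcases le_or_gt (N+1) x with h | h
  · rw [cdf_eq_one hβs hβ1 h, cdf_eq_one hαs hα1 h]
  · set P := cdf β x with hP
    set Q := cdf α x with hQ
    have hsplitα : Q + ∑ v ∈ Finset.Ico x (N+1), α v = 1 := by
      rw [hQ, cdf, Finset.range_eq_Ico, Finset.sum_Ico_consecutive α (Nat.zero_le x) (by omega),
        ← Finset.range_eq_Ico, hα1]
    have hsplitβ : P + ∑ v ∈ Finset.Ico x (N+1), β v = 1 := by
      rw [hP, cdf, Finset.range_eq_Ico, Finset.sum_Ico_consecutive β (Nat.zero_le x) (by omega),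
        ← Finset.range_eq_Ico, hβ1]
    have key : P * ∑ v ∈ Finset.Ico x (N+1), α v
        ≤ Q * ∑ v ∈ Finset.Ico x (N+1), β v := by
      rw [hP, hQ, cdf, cdf, Finset.sum_mul_sum, Finset.sum_mul_sum]
      refine Finset.sum_le_sum fun u hu => Finset.sum_le_sum fun v hv => ?_
      have hu' := Finset.mem_range.mp hu
      have hv' := (Finset.mem_Ico.mp hv).1
      exact LR1 u v (by omega)
    have eA : ∑ v ∈ Finset.Ico x (N+1), α v = 1 - Q := by linarith
    have eB : ∑ v ∈ Finset.Ico x (N+1), β v = 1 - P := by linarith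
    rw [eA, eB] at key
    nlinarith [key]

lemma cdf_dom2 {N : ℕ} {α β : ℕ → ℝ}
    (hα0 : ∀ k, 0 ≤ α k) (hβ0 : ∀ k, 0 ≤ β k)
    (hαs : ∀ k, N < k → α k = 0) (hβs : ∀ k, N < k → β k = 0)
    (hα1 : ∑ k ∈ Finset.range (N+1), α k = 1)
    (hβ1 : ∑ k ∈ Finset.range (N+1), β k = 1)
    (LR2 : ∀ x y, x ≤ y → α x * β (y+1) ≤ β (x+1) * α y) :
    ∀ x, cdf α (x+1) ≤ cdf β (x+2) := by
  intro x
  rcases le_or_gt (N+1) (x+1) with h | h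
  · rw [cdf_eq_one hαs hα1 h, cdf_eq_one hβs hβ1 (by omega)]
  · set A := cdf α (x+1) with hA
    set Cβ := cdf β (x+2) with hCβ
    have hβ2 : ∑ k ∈ Finset.range (N+2), β k = 1 := by
      rw [Finset.sum_range_succ, hβs (N+1) (by omega), add_zero, hβ1]
    have hsplitα : A + ∑ v ∈ Finset.Ico (x+1) (N+1), α v = 1 := by
      rw [hA, cdf, Finset.range_eq_Ico,
        Finset.sum_Ico_consecutive α (Nat.zero_le (x+1)) (by omega),
        ← Finset.range_eq_Ico, hα1]
    have hsplitβ : Cβ + ∑ w ∈ Finset.Ico (x+2) (N+2), β w = 1 := by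
      rw [hCβ, cdf, Finset.range_eq_Ico,
        Finset.sum_Ico_consecutive β (Nat.zero_le (x+2)) (by omega),
        ← Finset.range_eq_Ico, hβ2]
    have hreindex : ∑ w ∈ Finset.Ico (x+2) (N+2), β w
        = ∑ v ∈ Finset.Ico (x+1) (N+1), β (v+1) := by
      rw [← Finset.map_add_right_Ico (x+1) (N+1) 1, Finset.sum_map]
      rfl
    have key : A * ∑ w ∈ Finset.Ico (x+2) (N+2), β w
        ≤ (∑ u ∈ Finset.range (x+1), β (u+1)) * ∑ v ∈ Finset.Ico (x+1) (N+1), α v := by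
      rw [hreindex, hA, cdf, Finset.sum_mul_sum, Finset.sum_mul_sum]
      refine Finset.sum_le_sum fun u hu => Finset.sum_le_sum fun v hv => ?_
      have hu' := Finset.mem_range.mp hu
      have hv' := (Finset.mem_Ico.mp hv).1
      exact LR2 u v (by omega)
    have hβshift : ∑ u ∈ Finset.range (x+1), β (u+1) ≤ Cβ := by
      have e : ∑ u ∈ Finset.range (x+1), β (u+1)
          = ∑ w ∈ Finset.Ico 1 (x+2), β w := by
        rw [← Finset.map_add_right_Ico 0 (x+1) 1, Finset.sum_map, Finset.range_eq_Ico]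
        rfl
      rw [e, hCβ, cdf, Finset.range_eq_Ico]
      refine Finset.sum_le_sum_of_subset_of_nonneg ?_ (fun k _ _ => hβ0 k)
      intro k hk
      simp only [Finset.mem_Ico] at *
      omega
    have hTA : (0:ℝ) ≤ ∑ v ∈ Finset.Ico (x+1) (N+1), α v :=
      Finset.sum_nonneg fun v _ => hα0 v
    have eB : ∑ w ∈ Finset.Ico (x+2) (N+2), β w = 1 - Cβ := by linarith
    have eA : ∑ v ∈ Finset.Ico (x+1) (N+1), α v = 1 - A := by linarith
    rw [eB, eA] at key
    have key2 : A * (1 - Cβ) ≤ Cβ * (1 - A) := by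
      calc A * (1 - Cβ) ≤ (∑ u ∈ Finset.range (x+1), β (u+1)) * (1 - A) := key
      _ ≤ Cβ * (1 - A) := by
          refine mul_le_mul_of_nonneg_right hβshift ?_
          linarith
    nlinarith [key2]





lemma coreLine {μ B : ℕ → ℝ} (hμ : LC μ) (hB : LC B)
    (A : ℕ → ℕ → ℝ) (hA0 : ∀ k t, 0 ≤ A k t)
    (hAt : ∀ k t, A k t * B (t+1) ≤ A k (t+1) * B t)
    (hAk : ∀ k t, A k t ≤ A (k+1) t)
    (hAz : ∀ k t, B t = 0 → A k t = 0) (s : ℕ) :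
    (∑ k ∈ Finset.range (s+1), μ k * A k (s-k)) *
      (∑ j ∈ Finset.range (s+2), μ j * B (s+1-j))
    ≤ (∑ k ∈ Finset.range (s+2), μ k * A k (s+1-k)) *
      (∑ j ∈ Finset.range (s+1), μ j * B (s-j)) := by
  have hμ0 := hμ.1; have hB0 := hB.1
  set P := ∑ k ∈ Finset.range (s+1), μ k * A k (s-k) with hPdef
  set Q := ∑ j ∈ Finset.range (s+2), μ j * B (s+1-j) with hQdef
  set P' := ∑ k ∈ Finset.range (s+2), μ k * A k (s+1-k) with hP'def
  set Q' := ∑ j ∈ Finset.range (s+1), μ j * B (s-j) with hQ'def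
  have hP0 : 0 ≤ P := Finset.sum_nonneg fun k _ => mul_nonneg (hμ0 k) (hA0 _ _)
  have hQ0 : 0 ≤ Q := Finset.sum_nonneg fun k _ => mul_nonneg (hμ0 k) (hB0 _)
  have hP'0 : 0 ≤ P' := Finset.sum_nonneg fun k _ => mul_nonneg (hμ0 k) (hA0 _ _)
  have hQ'0 : 0 ≤ Q' := Finset.sum_nonneg fun k _ => mul_nonneg (hμ0 k) (hB0 _)
  rcases eq_or_lt_of_le hQ0 with hQz | hQpos
  · rw [← hQz, mul_zero]
    exact mul_nonneg hP'0 hQ'0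
  rcases eq_or_lt_of_le hQ'0 with hQ'z | hQ'pos
  · -- every term of Q' is zero, hence P = 0
    have hterm : ∀ j ∈ Finset.range (s+1), μ j * B (s-j) = 0 := by
      rw [← Finset.sum_eq_zero_iff_of_nonneg
        (fun j _ => mul_nonneg (hμ0 j) (hB0 _))]
      exact hQ'z.symm
    have hPz : P = 0 := by
      rw [hPdef]
      refine Finset.sum_eq_zero fun k hk => ?_
      rcases mul_eq_zero.mp (hterm k hk) with h | h
      · rw [h, zero_mul]
      · rw [hAz k _ h, mul_zero]
    rw [hPz, zero_mul]
    exact mul_nonneg hP'0 hQ'0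
  -- main case
  set ρ : ℕ → ℝ := fun k => if k ≤ s then μ k * B (s-k) else 0 with hρdef
  set ρ' : ℕ → ℝ := fun k => if k ≤ s+1 then μ k * B (s+1-k) else 0 with hρ'def
  have hρ0 : ∀ k, 0 ≤ ρ k := by
    intro k; rw [hρdef]; dsimp only; split
    · exact mul_nonneg (hμ0 k) (hB0 _)
    · exact le_refl 0
  have hρ'0 : ∀ k, 0 ≤ ρ' k := by
    intro k; rw [hρ'def]; dsimp only; split
    · exact mul_nonneg (hμ0 k) (hB0 _)
    · exact le_refl 0
  have hρsum : ∑ k ∈ Finset.range (s+2), ρ k = Q' := by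
    rw [Finset.sum_range_succ]
    rw [hρdef]; dsimp only
    rw [if_neg (by omega)]
    rw [add_zero, hQ'def]
    exact Finset.sum_congr rfl fun k hk => if_pos (by
      have := Finset.mem_range.mp hk; omega)
  have hρ'sum : ∑ k ∈ Finset.range (s+2), ρ' k = Q := by
    rw [hQdef]
    exact Finset.sum_congr rfl fun k hk => if_pos (by
      have := Finset.mem_range.mp hk; omega)
  set α : ℕ → ℝ := fun k => ρ k / Q' with hαdef
  set β : ℕ → ℝ := fun k => ρ' k / Q with hβdef
  have hα0 : ∀ k, 0 ≤ α k := fun k => div_nonneg (hρ0 k) (le_of_lt hQ'pos)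
  have hβ0 : ∀ k, 0 ≤ β k := fun k => div_nonneg (hρ'0 k) (le_of_lt hQpos)
  have hαs : ∀ k, s+1 < k → α k = 0 := by
    intro k hk
    simp only [hαdef, hρdef]
    rw [if_neg (by omega : ¬ k ≤ s), zero_div]
  have hβs : ∀ k, s+1 < k → β k = 0 := by
    intro k hk
    simp only [hβdef, hρ'def]
    rw [if_neg (by omega : ¬ k ≤ s + 1), zero_div]
  have hα1 : ∑ k ∈ Finset.range (s+2), α k = 1 := by
    simp only [hαdef]
    rw [← Finset.sum_div, hρsum, div_self (ne_of_gt hQ'pos)]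
  have hβ1 : ∑ k ∈ Finset.range (s+2), β k = 1 := by
    simp only [hβdef]
    rw [← Finset.sum_div, hρ'sum, div_self (ne_of_gt hQpos)]
  -- likelihood ratio facts
  have LRρ1 : ∀ x y, x ≤ y → ρ' x * ρ y ≤ ρ x * ρ' y := by
    intro x y hxy
    rcases le_or_gt y s with hy | hy
    · have hx : x ≤ s := le_trans hxy hy
      rw [hρdef, hρ'def]; dsimp only
      rw [if_pos hx, if_pos hy, if_pos (by omega : x ≤ s+1), if_pos (by omega : y ≤ s+1)]
      have hcross := hB.cross (s-y) (s-x) (by omega)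
      have ea : s-y+1 = s+1-y := by omega
      have eb : s-x+1 = s+1-x := by omega
      rw [ea, eb] at hcross
      calc μ x * B (s+1-x) * (μ y * B (s-y))
          = (μ x * μ y) * (B (s-y) * B (s+1-x)) := by ring
        _ ≤ (μ x * μ y) * (B (s+1-y) * B (s-x)) :=
            mul_le_mul_of_nonneg_left hcross (mul_nonneg (hμ0 x) (hμ0 y))
        _ = μ x * B (s-x) * (μ y * B (s+1-y)) := by ring
    · have : ρ y = 0 := by rw [hρdef]; dsimp only; rw [if_neg (by omega)]
      rw [this, mul_zero]
      exact mul_nonneg (hρ0 x) (hρ'0 y)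
  have LRρ2 : ∀ x y, x ≤ y → ρ x * ρ' (y+1) ≤ ρ' (x+1) * ρ y := by
    intro x y hxy
    rcases le_or_gt y s with hy | hy
    · have hx : x ≤ s := le_trans hxy hy
      rw [hρdef, hρ'def]; dsimp only
      rw [if_pos hx, if_pos hy, if_pos (by omega : x+1 ≤ s+1), if_pos (by omega : y+1 ≤ s+1)]
      have e1 : s+1-(y+1) = s-y := by omega
      have e2 : s+1-(x+1) = s-x := by omega
      rw [e1, e2]
      have hcross := hμ.cross x y hxy
      calc μ x * B (s-x) * (μ (y+1) * B (s-y))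
          = (μ x * μ (y+1)) * (B (s-x) * B (s-y)) := by ring
        _ ≤ (μ (x+1) * μ y) * (B (s-x) * B (s-y)) :=
            mul_le_mul_of_nonneg_right hcross (mul_nonneg (hB0 _) (hB0 _))
        _ = μ (x+1) * B (s-x) * (μ y * B (s-y)) := by ring
    · have : ρ' (y+1) = 0 := by rw [hρ'def]; dsimp only; rw [if_neg (by omega)]
      rw [this, mul_zero]
      exact mul_nonneg (hρ'0 _) (hρ0 y)
  have LR1 : ∀ x y, x ≤ y → β x * α y ≤ α x * β y := by
    intro x y hxy
    rw [hαdef, hβdef]; dsimp only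
    rw [div_mul_div_comm, div_mul_div_comm]
    rw [div_le_div_iff₀ (by positivity) (by positivity)]
    calc ρ' x * ρ y * (Q' * Q) ≤ ρ x * ρ' y * (Q' * Q) :=
      mul_le_mul_of_nonneg_right (LRρ1 x y hxy) (by positivity)
    _ = ρ x * ρ' y * (Q * Q') := by ring
  have LR2 : ∀ x y, x ≤ y → α x * β (y+1) ≤ β (x+1) * α y := by
    intro x y hxy
    rw [hαdef, hβdef]; dsimp only
    rw [div_mul_div_comm, div_mul_div_comm]
    rw [div_le_div_iff₀ (by positivity) (by positivity)]
    calc ρ x * ρ' (y+1) * (Q * Q') ≤ ρ' (x+1) * ρ y * (Q * Q') :=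
      mul_le_mul_of_nonneg_right (LRρ2 x y hxy) (by positivity)
    _ = ρ' (x+1) * ρ y * (Q' * Q) := by ring
  have hd1 := cdf_dom hα0 hβ0 hαs hβs hα1 hβ1 LR1
  have hd2 := cdf_dom2 hα0 hβ0 hαs hβs hα1 hβ1 LR2
  -- the functions
  set φ : ℕ → ℝ := fun k => (if k ≤ s then A k (s-k) else 0) / (if k ≤ s then B (s-k) else 0) with hφdef
  set ψ : ℕ → ℝ := fun k => (if k ≤ s+1 then A k (s+1-k) else 0) / (if k ≤ s+1 then B (s+1-k) else 0) with hψdef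
  have hρpos : ∀ x, 0 < α x → x ≤ s ∧ 0 < μ x ∧ 0 < B (s-x) := by
    intro x hx
    have hρx : 0 < ρ x := by
      have : ρ x = α x * Q' := by
        rw [hαdef]; dsimp only; field_simp
      rw [this]; exact mul_pos hx hQ'pos
    have hxs : x ≤ s := by
      by_contra hc
      rw [hρdef] at hρx; dsimp only at hρx; rw [if_neg hc] at hρx
      exact lt_irrefl _ hρx
    rw [hρdef] at hρx; dsimp only at hρx; rw [if_pos hxs] at hρx
    obtain ⟨h1, h2⟩ := pos_of_mul_pos_nonneg (hμ0 x) (hB0 _) (ne_of_gt hρx)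
    exact ⟨hxs, h1, h2⟩
  have hρ'pos : ∀ x, 0 < β x → x ≤ s+1 ∧ 0 < μ x ∧ 0 < B (s+1-x) := by
    intro x hx
    have hρx : 0 < ρ' x := by
      have : ρ' x = β x * Q := by
        rw [hβdef]; dsimp only; field_simp
      rw [this]; exact mul_pos hx hQpos
    have hxs : x ≤ s+1 := by
      by_contra hc
      rw [hρ'def] at hρx; dsimp only at hρx; rw [if_neg hc] at hρx
      exact lt_irrefl _ hρx
    rw [hρ'def] at hρx; dsimp only at hρx; rw [if_pos hxs] at hρx
    obtain ⟨h1, h2⟩ := pos_of_mul_pos_nonneg (hμ0 x) (hB0 _) (ne_of_gt hρx)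
    exact ⟨hxs, h1, h2⟩
  have hpsi : ∀ x, 0 < α x →
      ((0 < β x → φ x ≤ ψ x) ∧ (0 < β (x+1) → φ x ≤ ψ (x+1))) := by
    intro x hαx
    obtain ⟨hxs, hμx, hBx⟩ := hρpos x hαx
    constructor
    · intro hβx
      obtain ⟨hxs', _, hBx'⟩ := hρ'pos x hβx
      rw [hφdef, hψdef]; dsimp only
      rw [if_pos hxs, if_pos hxs, if_pos hxs', if_pos hxs']
      rw [div_le_div_iff₀ hBx hBx']
      have := hAt x (s-x)
      have e : s-x+1 = s+1-x := by omega
      rw [e] at this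
      exact this
    · intro hβx1
      obtain ⟨hxs', _, hBx'⟩ := hρ'pos (x+1) hβx1
      rw [hφdef, hψdef]; dsimp only
      rw [if_pos hxs, if_pos hxs, if_pos hxs', if_pos hxs']
      have e : s+1-(x+1) = s-x := by omega
      rw [e]
      rw [div_le_div_iff₀ hBx hBx]
      exact mul_le_mul_of_nonneg_right (hAk x (s-x)) (le_of_lt hBx)
  have main := coupling_exp_le (s+1) α β φ ψ hα0 hβ0 hαs hβs hα1 hβ1 hd1 hd2 hpsi
  -- identify the sums
  have idα : ∑ k ∈ Finset.range (s+2), α k * φ k = P / Q' := by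
    have hterm : ∀ k, k ≤ s → α k * φ k = (μ k * A k (s-k)) / Q' := by
      intro k hk
      rw [hαdef, hφdef, hρdef]; dsimp only
      rw [if_pos hk, if_pos hk, if_pos hk]
      rcases eq_or_lt_of_le (hB0 (s-k)) with hBz | hBpos
      · rw [← hBz, hAz k _ hBz.symm]
        simp
      · field_simp
    rw [hPdef, Finset.sum_range_succ, Finset.sum_div]
    have hlast : α (s+1) * φ (s+1) = 0 := by
      rw [hαdef, hρdef]; dsimp only
      rw [if_neg (by omega), zero_div, zero_mul]
    rw [hlast, add_zero]
    exact Finset.sum_congr rfl fun k hk => hterm k (by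
      have := Finset.mem_range.mp hk; omega)
  have idβ : ∑ k ∈ Finset.range (s+2), β k * ψ k = P' / Q := by
    have hterm : ∀ k, k ≤ s+1 → β k * ψ k = (μ k * A k (s+1-k)) / Q := by
      intro k hk
      rw [hβdef, hψdef, hρ'def]; dsimp only
      rw [if_pos hk, if_pos hk, if_pos hk]
      rcases eq_or_lt_of_le (hB0 (s+1-k)) with hBz | hBpos
      · rw [← hBz, hAz k _ hBz.symm]
        simp
      · field_simp
    rw [hP'def, Finset.sum_div]
    exact Finset.sum_congr rfl fun k hk => hterm k (by
      have := Finset.mem_range.mp hk; omega)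
  rw [idα, idβ] at main
  rw [div_le_div_iff₀ hQ'pos hQpos] at main
  linarith [main]

lemma snoc_le_snoc {n : ℕ} {y y' : Fin n → ℕ} {k k' : ℕ} (h : y ≤ y') (hk : k ≤ k') :
    (Fin.snoc y k : Fin (n+1) → ℕ) ≤ (Fin.snoc y' k' : Fin (n+1) → ℕ) := by
  intro i
  refine Fin.lastCases ?_ ?_ i
  · simp only [Fin.snoc_last]; exact hk
  · intro j; simp only [Fin.snoc_castSucc]; exact h j

lemma lineSum_one_LC : ∀ (n : ℕ) (ν : Fin n → ℕ → ℝ), (∀ i, LC (ν i)) →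
    LC (fun s => lineSum n ν (fun _ => 1) s) := by
  intro n
  induction n with
  | zero =>
    intro ν _
    have he : (fun s => lineSum 0 ν (fun _ => 1) s) = fun s => if s = 0 then 1 else 0 := rfl
    rw [he]
    refine ⟨?_, ?_, ?_⟩
    · intro x; dsimp only; split
      · exact zero_le_one
      · exact le_refl 0
    · intro x y hxy hy
      dsimp only at hy ⊢
      rcases eq_or_ne y 0 with rfl | hy0
      · have : x = 0 := by omega
        subst this; simpa using hy
      · rw [if_neg hy0] at hy; exact absurd hy (lt_irrefl 0)
    · intro x; dsimp only
      rw [if_neg (by omega : ¬ x + 2 = 0)]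
      rw [mul_zero]
      positivity
  | succ n ih =>
    intro ν hν
    have he : (fun s => lineSum (n+1) ν (fun _ => 1) s)
        = fun t => ∑ k ∈ Finset.range (t+1), ν (Fin.last n) k *
            lineSum n (fun i => ν i.castSucc) (fun _ => 1) (t - k) := rfl
    rw [he]
    exact conv_LC (hν (Fin.last n)) (ih _ (fun i => hν i.castSucc))

theorem efron : ∀ (n : ℕ) (ν : Fin n → ℕ → ℝ), (∀ i, LC (ν i)) →
    ∀ F : (Fin n → ℕ) → ℝ, Monotone F → (∀ x, 0 ≤ F x) → ∀ s : ℕ,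
    lineSum n ν F s * lineSum n ν (fun _ => 1) (s+1)
      ≤ lineSum n ν F (s+1) * lineSum n ν (fun _ => 1) s := by
  intro n
  induction n with
  | zero =>
    intro ν hν F hF hF0 s
    have h1 : lineSum 0 ν (fun _ => 1) (s+1) = 0 := by
      show (if s+1 = 0 then (1:ℝ) else 0) = 0
      rw [if_neg (by omega)]
    rw [h1, mul_zero]
    exact mul_nonneg (lineSum_nonneg (fun i x => (hν i).1 x) hF0 _)
      (lineSum_nonneg (fun i x => (hν i).1 x) (fun _ => zero_le_one) _)
  | succ n ih =>
    intro ν hν F hF hF0 s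
    set ν' : Fin n → ℕ → ℝ := fun i => ν i.castSucc with hν'def
    have hν' : ∀ i, LC (ν' i) := fun i => hν i.castSucc
    have hν'0 : ∀ i x, 0 ≤ ν' i x := fun i x => (hν' i).1 x
    set B : ℕ → ℝ := fun t => lineSum n ν' (fun _ => 1) t with hBdef
    set A : ℕ → ℕ → ℝ := fun k t => lineSum n ν' (fun y => F (Fin.snoc y k)) t with hAdef
    have hrecF : ∀ z : ℕ, lineSum (n+1) ν F z
        = ∑ k ∈ Finset.range (z+1), ν (Fin.last n) k * A k (z-k) := fun z => rfl
    have hrec1 : ∀ z : ℕ, lineSum (n+1) ν (fun _ => 1) z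
        = ∑ k ∈ Finset.range (z+1), ν (Fin.last n) k * B (z-k) := fun z => rfl
    rw [hrecF s, hrecF (s+1), hrec1 s, hrec1 (s+1)]
    have hmono : ∀ k, Monotone (fun y => F (Fin.snoc y k)) := by
      intro k y y' hy
      exact hF (snoc_le_snoc hy (le_refl k))
    have hnn : ∀ k y, 0 ≤ F (Fin.snoc y k) := fun k y => hF0 _
    refine coreLine (hν (Fin.last n)) (lineSum_one_LC n ν' hν') A ?_ ?_ ?_ ?_ s
    · intro k t
      exact lineSum_nonneg hν'0 (hnn k) t
    · intro k t
      exact ih ν' hν' _ (hmono k) (hnn k) t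
    · intro k t
      refine lineSum_mono hν'0 (fun y => ?_) t
      exact hF (snoc_le_snoc (le_refl y) (by omega))
    · intro k t hBt
      exact lineSum_zero hν'0 (hnn k) t hBt

theorem efron_chain (n : ℕ) (ν : Fin n → ℕ → ℝ) (hν : ∀ i, LC (ν i))
    (F : (Fin n → ℕ) → ℝ) (hF : Monotone F) (hF0 : ∀ x, 0 ≤ F x) :
    ∀ s t : ℕ, s ≤ t →
    lineSum n ν F s * lineSum n ν (fun _ => 1) t
      ≤ lineSum n ν F t * lineSum n ν (fun _ => 1) s := by
  have hν0 : ∀ i x, 0 ≤ ν i x := fun i x => (hν i).1 x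
  intro s t hst
  induction t, hst using Nat.le_induction with
  | base => exact le_refl _
  | succ t hst ih =>
    by_cases hbt : lineSum n ν (fun _ => 1) t = 0
    · have hbt1 : lineSum n ν (fun _ => 1) (t+1) = 0 := by
        by_contra hne
        have hpos : 0 < lineSum n ν (fun _ => 1) t :=
          (lineSum_one_LC n ν hν).2.1 t (t+1) (by omega)
            (lt_of_le_of_ne (lineSum_nonneg hν0 (fun _ => zero_le_one) _) (Ne.symm hne))
        rw [hbt] at hpos
        exact lt_irrefl _ hpos
      rw [hbt1, mul_zero]
      exact mul_nonneg (lineSum_nonneg hν0 hF0 _)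
        (lineSum_nonneg hν0 (fun _ => zero_le_one) _)
    · have hbtpos : 0 < lineSum n ν (fun _ => 1) t :=
        lt_of_le_of_ne (lineSum_nonneg hν0 (fun _ => zero_le_one) _) (Ne.symm hbt)
      have h1 := efron n ν hν F hF hF0 t
      have hbs : 0 ≤ lineSum n ν (fun _ => 1) s :=
        lineSum_nonneg hν0 (fun _ => zero_le_one) _
      have hb1 : 0 ≤ lineSum n ν (fun _ => 1) (t+1) :=
        lineSum_nonneg hν0 (fun _ => zero_le_one) _
      have h2 : lineSum n ν F s * lineSum n ν (fun _ => 1) (t+1) * lineSum n ν (fun _ => 1) t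
          ≤ lineSum n ν F (t+1) * lineSum n ν (fun _ => 1) s * lineSum n ν (fun _ => 1) t := by
        calc lineSum n ν F s * lineSum n ν (fun _ => 1) (t+1) * lineSum n ν (fun _ => 1) t
            = (lineSum n ν F s * lineSum n ν (fun _ => 1) t) * lineSum n ν (fun _ => 1) (t+1) := by ring
          _ ≤ (lineSum n ν F t * lineSum n ν (fun _ => 1) s) * lineSum n ν (fun _ => 1) (t+1) :=
              mul_le_mul_of_nonneg_right ih hb1
          _ = (lineSum n ν F t * lineSum n ν (fun _ => 1) (t+1)) * lineSum n ν (fun _ => 1) s := by ring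
          _ ≤ (lineSum n ν F (t+1) * lineSum n ν (fun _ => 1) t) * lineSum n ν (fun _ => 1) s :=
              mul_le_mul_of_nonneg_right h1 hbs
          _ = lineSum n ν F (t+1) * lineSum n ν (fun _ => 1) s * lineSum n ν (fun _ => 1) t := by ring
      exact le_of_mul_le_mul_right h2 hbtpos





lemma tsum_level {n : ℕ} (h : (Fin n → ℕ) → ENNReal) :
    ∑' x : Fin n → ℕ, h x = ∑' s : ℕ, ∑ x ∈ levelFinset n s, h x := by
  have e1 : ∀ x : Fin n → ℕ, h x = ∑' s : ℕ, if (∑ i, x i) = s then h x else 0 := by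
    intro x
    rw [tsum_eq_single (∑ i, x i) (fun s hs => if_neg (fun hc => hs (hc.symm)))]
    rw [if_pos rfl]
  calc ∑' x, h x = ∑' x, ∑' s, if (∑ i, x i) = s then h x else 0 := tsum_congr e1
    _ = ∑' s, ∑' x : Fin n → ℕ, if (∑ i, x i) = s then h x else 0 := ENNReal.tsum_comm
    _ = ∑' s, ∑ x ∈ levelFinset n s, h x := by
        refine tsum_congr fun s => ?_
        rw [tsum_eq_sum (s := levelFinset n s)
          (fun x hx => if_neg (fun hc => hx (mem_levelFinset.mpr hc)))]
        exact Finset.sum_congr rfl fun x hx => if_pos (mem_levelFinset.mp hx)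

noncomputable def snocEquiv (n : ℕ) : ((Fin n → ℕ) × ℕ) ≃ (Fin (n+1) → ℕ) where
  toFun p := Fin.snoc p.1 p.2
  invFun x := (Fin.init x, x (Fin.last n))
  left_inv p := by
    refine Prod.ext ?_ ?_
    · simp
    · simp
  right_inv x := Fin.snoc_init_self x

lemma tsum_pi_prod : ∀ (n : ℕ) (g : Fin n → ℕ → ENNReal),
    ∑' x : Fin n → ℕ, ∏ i, g i (x i) = ∏ i, ∑' y : ℕ, g i y := by
  intro n
  induction n with
  | zero =>
    intro g
    haveI : Subsingleton (Fin 0 → ℕ) := ⟨fun a b => funext fun i => i.elim0⟩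
    rw [tsum_eq_single (fun (i : Fin 0) => i.elim0)
      (fun b' hb' => absurd (Subsingleton.elim b' _) hb')]
    simp
  | succ n ih =>
    intro g
    rw [← (snocEquiv n).tsum_eq]
    have e1 : ∀ p : (Fin n → ℕ) × ℕ,
        (∏ i : Fin (n+1), g i ((snocEquiv n) p i))
          = (∏ i : Fin n, g i.castSucc (p.1 i)) * g (Fin.last n) p.2 := by
      intro p
      rw [Fin.prod_univ_castSucc]
      simp [snocEquiv]
    rw [tsum_congr e1]
    have eprod := ENNReal.tsum_prod (f := fun (y : Fin n → ℕ) (k : ℕ) =>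
      (∏ i : Fin n, g i.castSucc (y i)) * g (Fin.last n) k)
    rw [eprod]
    have e2 : ∀ y : Fin n → ℕ,
        (∑' k : ℕ, (∏ i : Fin n, g i.castSucc (y i)) * g (Fin.last n) k)
          = (∏ i : Fin n, g i.castSucc (y i)) * ∑' k, g (Fin.last n) k :=
      fun y => ENNReal.tsum_mul_left
    rw [tsum_congr e2, ENNReal.tsum_mul_right, ih (fun i => g i.castSucc)]
    rw [Fin.prod_univ_castSucc]

lemma levelDecomp {n : ℕ} {ν : Fin n → ℕ → ℝ} {H : (Fin n → ℕ) → ℝ}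
    (hν : ∀ i x, 0 ≤ ν i x) (hH : ∀ x, 0 ≤ H x) (g : ℕ → ENNReal) :
    ∑' x : Fin n → ℕ, g (∑ i, x i) * ENNReal.ofReal (H x * ∏ i, ν i (x i))
      = ∑' s, g s * ENNReal.ofReal (lineSum n ν H s) := by
  rw [tsum_level]
  refine tsum_congr fun s => ?_
  rw [lineSum_eq_sum, ENNReal.ofReal_sum_of_nonneg
    (fun x _ => mul_nonneg (hH x) (Finset.prod_nonneg fun i _ => hν i _)),
    Finset.mul_sum]
  exact Finset.sum_congr rfl fun x hx => by rw [mem_levelFinset.mp hx]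

/-- Chebyshev / rearrangement inequality in `ℝ≥0∞`. -/
lemma cheb (u v : ℕ → ENNReal) (L : ENNReal) (hL1 : 1 ≤ L) (hLt : L ≠ ⊤)
    (hc : ∀ s t : ℕ, s ≤ t → u s * v t ≤ u t * v s) :
    (∑' s, u s) * (∑' t, L ^ t * v t) ≤ (∑' s, L ^ s * u s) * (∑' t, v t) := by
  have key : ∀ s t : ℕ, s ≤ t →
      u s * (L ^ t * v t) + u t * (L ^ s * v s)
        ≤ L ^ s * u s * v t + L ^ t * u t * v s := by
    intro s t hst
    have hpow : L ^ s ≤ L ^ t := pow_le_pow_right₀ hL1 hst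
    set d := L ^ t - L ^ s with hddef
    have hd : L ^ t = L ^ s + d := by
      rw [hddef, add_comm, tsub_add_cancel_of_le hpow]
    have hcst := hc s t hst
    calc u s * (L ^ t * v t) + u t * (L ^ s * v s)
        = L ^ s * (u s * v t) + d * (u s * v t) + L ^ s * (u t * v s) := by
          rw [hd]; ring
      _ ≤ L ^ s * (u s * v t) + d * (u t * v s) + L ^ s * (u t * v s) :=
          add_le_add (add_le_add (le_refl _) (mul_le_mul_right hcst d)) (le_refl _)
      _ = L ^ s * u s * v t + L ^ t * u t * v s := by rw [hd]; ring
  have hterm : ∀ s t : ℕ, u s * (L ^ t * v t) + u t * (L ^ s * v s)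
      ≤ L ^ s * u s * v t + L ^ t * u t * v s := by
    intro s t
    rcases le_total s t with h | h
    · exact key s t h
    · rw [add_comm, add_comm (L ^ s * u s * v t)]
      exact key t s h
  set S1 := ∑' s : ℕ, ∑' t : ℕ, u s * (L ^ t * v t) with hS1
  set S1' := ∑' s : ℕ, ∑' t : ℕ, u t * (L ^ s * v s) with hS1'
  set S2 := ∑' s : ℕ, ∑' t : ℕ, L ^ s * u s * v t with hS2
  set S2' := ∑' s : ℕ, ∑' t : ℕ, L ^ t * u t * v s with hS2'
  have swapA : S1 = S1' := by rw [hS1, hS1']; exact ENNReal.tsum_comm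
  have swapB : S2 = S2' := by rw [hS2, hS2']; exact ENNReal.tsum_comm
  have sumineq : S1 + S1' ≤ S2 + S2' := by
    rw [hS1, hS1', hS2, hS2', ← ENNReal.tsum_add, ← ENNReal.tsum_add]
    refine ENNReal.tsum_le_tsum fun s => ?_
    rw [← ENNReal.tsum_add, ← ENNReal.tsum_add]
    exact ENNReal.tsum_le_tsum fun t => hterm s t
  have expand1 : (∑' s, u s) * (∑' t, L ^ t * v t) = S1 := by
    rw [hS1, ← ENNReal.tsum_mul_right]
    exact tsum_congr fun s => ENNReal.tsum_mul_left.symm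
  have expand2 : (∑' s, L ^ s * u s) * (∑' t, v t) = S2 := by
    rw [hS2, ← ENNReal.tsum_mul_right]
    exact tsum_congr fun s => ENNReal.tsum_mul_left.symm
  rw [expand1, expand2]
  have h2 : S1 + S1 ≤ S2 + S2 := by
    calc S1 + S1 = S1 + S1' := by rw [← swapA]
    _ ≤ S2 + S2' := sumineq
    _ = S2 + S2 := by rw [← swapB]
  rw [← two_mul, ← two_mul] at h2
  exact (ENNReal.mul_le_mul_iff_right (by norm_num) (by norm_num)).mp h2





lemma summable_of_ofReal_ne_top {α : Type*} {f : α → ℝ} (h0 : ∀ a, 0 ≤ f a)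
    (h : (∑' a, ENNReal.ofReal (f a)) ≠ ⊤) : Summable f := by
  have h1 := ENNReal.summable_toReal h
  have h2 : (fun a => (ENNReal.ofReal (f a)).toReal) = f :=
    funext fun a => ENNReal.toReal_ofReal (h0 a)
  rwa [h2] at h1

lemma tsum_ofReal_eq {α : Type*} {f : α → ℝ} (h0 : ∀ a, 0 ≤ f a)
    (h : (∑' a, ENNReal.ofReal (f a)) ≠ ⊤) :
    ENNReal.ofReal (∑' a, f a) = ∑' a, ENNReal.ofReal (f a) :=
  ENNReal.ofReal_tsum_of_nonneg h0 (summable_of_ofReal_ne_top h0 h)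

lemma swap_ennreal {ℓ n : ℕ} (hln : ℓ ≤ n) (dE : (Fin n → ℕ) → ENNReal)
    (gE : (Fin ℓ → ℕ) → ENNReal) :
    (∑' v : Fin ℓ → ℕ, gE v * ∑' x : Fin n → ℕ,
        (if (∀ i : Fin ℓ, x (Fin.castLE hln i) = v i) then dE x else 0))
      = ∑' x : Fin n → ℕ, gE (fun i => x (Fin.castLE hln i)) * dE x := by
  calc (∑' v : Fin ℓ → ℕ, gE v * ∑' x : Fin n → ℕ,
        (if (∀ i : Fin ℓ, x (Fin.castLE hln i) = v i) then dE x else 0))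
      = ∑' v : Fin ℓ → ℕ, ∑' x : Fin n → ℕ,
          gE v * (if (∀ i : Fin ℓ, x (Fin.castLE hln i) = v i) then dE x else 0) :=
        tsum_congr fun v => ENNReal.tsum_mul_left.symm
    _ = ∑' x : Fin n → ℕ, ∑' v : Fin ℓ → ℕ,
          gE v * (if (∀ i : Fin ℓ, x (Fin.castLE hln i) = v i) then dE x else 0) :=
        ENNReal.tsum_comm
    _ = ∑' x : Fin n → ℕ, gE (fun i => x (Fin.castLE hln i)) * dE x := by
        refine tsum_congr fun x => ?_
        rw [tsum_eq_single (fun i => x (Fin.castLE hln i)) ?_]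
        · rw [if_pos (fun i => rfl)]
        · intro v hv
          rw [if_neg, mul_zero]
          intro hc
          exact hv (funext fun i => (hc i).symm)

lemma cond_reduce' {ℓ n : ℕ} (hln : ℓ ≤ n) (d : (Fin n → ℕ) → ℝ)
    (hd0 : ∀ x, 0 ≤ d x)
    (hfin : (∑' x : Fin n → ℕ, ENNReal.ofReal (d x)) ≠ ⊤)
    (hD : 0 < ∑' x : Fin n → ℕ, d x)
    (f : (Fin ℓ → ℕ) → ℝ) (C : ℝ) (hC : ∀ v, |f v| ≤ C) :
    (∑' v : Fin ℓ → ℕ, f v * ((∑' x : Fin n → ℕ,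
        if (∀ i : Fin ℓ, x (Fin.castLE hln i) = v i) then d x else 0)
      / (∑' x : Fin n → ℕ, d x)))
      = (∑' x : Fin n → ℕ, (f (fun i => x (Fin.castLE hln i)) + C) * d x)
        / (∑' x : Fin n → ℕ, d x) - C := by
  classical
  have hC0 : 0 ≤ C := le_trans (abs_nonneg _) (hC (fun _ => 0))
  set F : (Fin ℓ → ℕ) → ℝ := fun v => f v + C with hF
  have hF0 : ∀ v, 0 ≤ F v := by
    intro v; have := abs_le.mp (hC v); rw [hF]; dsimp only; linarith [this.1]
  have hFc : ∀ v, F v ≤ 2*C := by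
    intro v; have := abs_le.mp (hC v); rw [hF]; dsimp only; linarith [this.2]
  set dE : (Fin n → ℕ) → ENNReal := fun x => ENNReal.ofReal (d x) with hdE
  set Num : (Fin ℓ → ℕ) → ℝ := fun v => ∑' x : Fin n → ℕ,
    if (∀ i : Fin ℓ, x (Fin.castLE hln i) = v i) then d x else 0 with hNum
  set D : ℝ := ∑' x : Fin n → ℕ, d x with hD'
  have hNum0 : ∀ v, 0 ≤ Num v := by
    intro v; rw [hNum]
    refine tsum_nonneg fun x => ?_
    split
    · exact hd0 x
    · exact le_refl 0
  have hinner_of : ∀ v : Fin ℓ → ℕ, ENNReal.ofReal (Num v)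
      = ∑' x : Fin n → ℕ, (if (∀ i : Fin ℓ, x (Fin.castLE hln i) = v i) then dE x else 0) := by
    intro v
    have h0 : ∀ x : Fin n → ℕ,
        0 ≤ (if (∀ i : Fin ℓ, x (Fin.castLE hln i) = v i) then d x else 0) := by
      intro x; split
      · exact hd0 x
      · exact le_refl 0
    have hfin' : (∑' x : Fin n → ℕ, ENNReal.ofReal
        (if (∀ i : Fin ℓ, x (Fin.castLE hln i) = v i) then d x else 0)) ≠ ⊤ := by
      refine ne_top_of_le_ne_top hfin (ENNReal.tsum_le_tsum fun x => ?_)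
      split
      · exact le_refl _
      · simp
    rw [hNum, tsum_ofReal_eq h0 hfin']
    refine tsum_congr fun x => ?_
    rw [hdE]
    split
    · rfl
    · exact ENNReal.ofReal_zero
  have hNum_sum_E : (∑' v : Fin ℓ → ℕ, ENNReal.ofReal (Num v)) = ∑' x : Fin n → ℕ, dE x := by
    calc (∑' v : Fin ℓ → ℕ, ENNReal.ofReal (Num v))
        = ∑' v : Fin ℓ → ℕ, (1:ENNReal) * ∑' x : Fin n → ℕ,
            (if (∀ i : Fin ℓ, x (Fin.castLE hln i) = v i) then dE x else 0) :=
          tsum_congr fun v => by rw [hinner_of, one_mul]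
      _ = ∑' x : Fin n → ℕ, (1:ENNReal) * dE x := swap_ennreal hln dE (fun _ => 1)
      _ = ∑' x : Fin n → ℕ, dE x := tsum_congr fun x => one_mul _
  have hdEfin : (∑' x : Fin n → ℕ, dE x) ≠ ⊤ := hfin
  have hNumSummable : Summable Num :=
    summable_of_ofReal_ne_top hNum0 (by rw [hNum_sum_E]; exact hdEfin)
  have hNumD : (∑' v : Fin ℓ → ℕ, Num v) = D := by
    have h2 : ENNReal.ofReal (∑' v : Fin ℓ → ℕ, Num v) = ENNReal.ofReal D := by
      rw [tsum_ofReal_eq hNum0 (by rw [hNum_sum_E]; exact hdEfin), hNum_sum_E, hD',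
        tsum_ofReal_eq hd0 hfin]
    exact (ENNReal.ofReal_eq_ofReal_iff (tsum_nonneg hNum0)
      (by rw [hD']; exact tsum_nonneg hd0)).mp h2
  -- F-weighted swap
  have hb : ∀ x : Fin n → ℕ, ENNReal.ofReal (F (fun i => x (Fin.castLE hln i)) * d x)
      ≤ ENNReal.ofReal (2*C) * dE x := by
    intro x
    rw [hdE, ← ENNReal.ofReal_mul (by linarith : (0:ℝ) ≤ 2*C)]
    exact ENNReal.ofReal_le_ofReal (mul_le_mul_of_nonneg_right (hFc _) (hd0 x))
  have hFd_fin : (∑' x : Fin n → ℕ,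
      ENNReal.ofReal (F (fun i => x (Fin.castLE hln i)) * d x)) ≠ ⊤ := by
    have hcalc : (∑' x : Fin n → ℕ, ENNReal.ofReal (F (fun i => x (Fin.castLE hln i)) * d x))
        ≤ ENNReal.ofReal (2*C) * ∑' x : Fin n → ℕ, dE x := by
      calc (∑' x : Fin n → ℕ, ENNReal.ofReal (F (fun i => x (Fin.castLE hln i)) * d x))
          ≤ ∑' x : Fin n → ℕ, ENNReal.ofReal (2*C) * dE x := ENNReal.tsum_le_tsum hb
        _ = ENNReal.ofReal (2*C) * ∑' x : Fin n → ℕ, dE x := ENNReal.tsum_mul_left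
    exact ne_top_of_le_ne_top (ENNReal.mul_ne_top ENNReal.ofReal_ne_top hdEfin) hcalc
  have hFN_E : (∑' v : Fin ℓ → ℕ, ENNReal.ofReal (F v * Num v))
      = ∑' x : Fin n → ℕ, ENNReal.ofReal (F (fun i => x (Fin.castLE hln i)) * d x) := by
    calc (∑' v : Fin ℓ → ℕ, ENNReal.ofReal (F v * Num v))
        = ∑' v : Fin ℓ → ℕ, ENNReal.ofReal (F v) * ∑' x : Fin n → ℕ,
            (if (∀ i : Fin ℓ, x (Fin.castLE hln i) = v i) then dE x else 0) :=
          tsum_congr fun v => by rw [ENNReal.ofReal_mul (hF0 v), hinner_of]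
      _ = ∑' x : Fin n → ℕ, ENNReal.ofReal (F (fun i => x (Fin.castLE hln i))) * dE x :=
          swap_ennreal hln dE (fun v => ENNReal.ofReal (F v))
      _ = ∑' x : Fin n → ℕ, ENNReal.ofReal (F (fun i => x (Fin.castLE hln i)) * d x) :=
          tsum_congr fun x => by rw [hdE, ENNReal.ofReal_mul (hF0 _)]
  have hFN_fin : (∑' v : Fin ℓ → ℕ, ENNReal.ofReal (F v * Num v)) ≠ ⊤ := by
    rw [hFN_E]; exact hFd_fin
  have hFNSummable : Summable (fun v => F v * Num v) :=
    summable_of_ofReal_ne_top (fun v => mul_nonneg (hF0 v) (hNum0 v)) hFN_fin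
  have hFN_eq : (∑' v : Fin ℓ → ℕ, F v * Num v)
      = ∑' x : Fin n → ℕ, F (fun i => x (Fin.castLE hln i)) * d x := by
    have h2 : ENNReal.ofReal (∑' v : Fin ℓ → ℕ, F v * Num v)
        = ENNReal.ofReal (∑' x : Fin n → ℕ, F (fun i => x (Fin.castLE hln i)) * d x) := by
      rw [tsum_ofReal_eq (fun v => mul_nonneg (hF0 v) (hNum0 v)) hFN_fin, hFN_E,
        tsum_ofReal_eq (fun x => mul_nonneg (hF0 _) (hd0 x)) hFd_fin]
    exact (ENNReal.ofReal_eq_ofReal_iff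
      (tsum_nonneg fun v => mul_nonneg (hF0 v) (hNum0 v))
      (tsum_nonneg fun x => mul_nonneg (hF0 _) (hd0 x))).mp h2
  -- final algebra
  have hDne : D ≠ 0 := ne_of_gt hD
  have hsplit : ∀ v, f v * (Num v / D) = (F v * Num v - C * Num v) / D := by
    intro v; rw [hF]; dsimp only; ring
  calc (∑' v : Fin ℓ → ℕ, f v * (Num v / D))
      = ∑' v : Fin ℓ → ℕ, (F v * Num v - C * Num v) / D := tsum_congr hsplit
    _ = (∑' v : Fin ℓ → ℕ, (F v * Num v - C * Num v)) / D := tsum_div_const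
    _ = ((∑' v : Fin ℓ → ℕ, F v * Num v) - ∑' v : Fin ℓ → ℕ, C * Num v) / D := by
        rw [Summable.tsum_sub hFNSummable (hNumSummable.mul_left C)]
    _ = ((∑' x : Fin n → ℕ, F (fun i => x (Fin.castLE hln i)) * d x) - C * D) / D := by
        rw [hFN_eq, hNumSummable.tsum_mul_left C, hNumD]
    _ = (∑' x : Fin n → ℕ, F (fun i => x (Fin.castLE hln i)) * d x) / D - C := by
        rw [sub_div, mul_div_assoc, div_self hDne, mul_one]


end GCP

/-- GCP upper sandwich bound: for log-concave laws `νᵢ`, `1 < λ* < λ < λ^max`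
and `Rₙ* = E[Sₙ^{λ*}]`, the conditional law of `(X₁,…,X_ℓ)` given
`{Sₙ > Rₙ*}` is stochastically dominated by the conditional law of
`(X₁^λ,…,X_ℓ^λ)` given `{Sₙ^λ > Rₙ*}`, for every `n ≥ ℓ`. -/
theorem gcp_upper_bound (ν : ℕ → ℕ → ℝ)
    (hlc : ∀ i, LogConcavePMF (ν i)) (hν1 : ∀ i, HasSum (ν i) 1)
    (lamstar lam : ℝ) (h1 : 1 < lamstar) (hsl : lamstar < lam)
    (hZstar : ∀ i, Summable (fun x : ℕ => lamstar ^ x * ν i x))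
    (hZ : ∀ i, Summable (fun x : ℕ => lam ^ x * ν i x))
    (ℓ n : ℕ) (hln : ℓ ≤ n)
    (R : ℝ) (hR : R = ∑ i ∈ Finset.range n, ∑' x : ℕ, (x : ℝ) * tilt (ν i) lamstar x)
    (hpos : 0 < ∑' x : Fin n → ℕ,
      if R < ((∑ i, x i : ℕ) : ℝ) then ∏ i : Fin n, ν i (x i) else 0)
    (hpos' : 0 < ∑' x : Fin n → ℕ,
      if R < ((∑ i, x i : ℕ) : ℝ) then ∏ i : Fin n, tilt (ν i) lam (x i) else 0) :
    StochDom (condMarginal ν ℓ n hln R)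
      (condMarginal (fun i => tilt (ν i) lam) ℓ n hln R) := by
  classical
  intro f hf hfb
  obtain ⟨C, hC⟩ := hfb
  have hC0 : 0 ≤ C := le_trans (abs_nonneg _) (hC fun _ => 0)
  have hlam1 : (1:ℝ) < lam := lt_trans h1 hsl
  have hlam0 : (0:ℝ) < lam := by linarith
  set νn : Fin n → ℕ → ℝ := fun i => ν i with hνn
  have hLCi : ∀ i : Fin n, GCP.LC (νn i) := fun i => hlc i
  have hν0 : ∀ (i : Fin n) (x : ℕ), 0 ≤ νn i x := fun i x => (hLCi i).1 x
  -- weights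
  set dν : (Fin n → ℕ) → ℝ :=
    fun x => if R < ((∑ i, x i : ℕ) : ℝ) then ∏ i : Fin n, ν i (x i) else 0 with hdν
  set dL : (Fin n → ℕ) → ℝ :=
    fun x => if R < ((∑ i, x i : ℕ) : ℝ) then ∏ i : Fin n, tilt (ν i) lam (x i) else 0 with hdL
  set dw : (Fin n → ℕ) → ℝ :=
    fun x => if R < ((∑ i, x i : ℕ) : ℝ) then lam ^ (∑ i, x i) * ∏ i : Fin n, ν i (x i) else 0
    with hdw
  have hdν0 : ∀ x, 0 ≤ dν x := by
    intro x; rw [hdν]; dsimp only; split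
    · exact Finset.prod_nonneg fun i _ => hν0 i _
    · exact le_refl 0
  have htilt0 : ∀ (i : Fin n) (y : ℕ), 0 ≤ tilt (ν i) lam y := by
    intro i y
    unfold tilt
    exact div_nonneg (mul_nonneg (pow_nonneg hlam0.le y) (hν0 i y))
      (tsum_nonneg fun z => mul_nonneg (pow_nonneg hlam0.le z) (hν0 i z))
  have hdL0 : ∀ x, 0 ≤ dL x := by
    intro x; rw [hdL]; dsimp only; split
    · exact Finset.prod_nonneg fun i _ => htilt0 i _
    · exact le_refl 0
  have hdw0 : ∀ x, 0 ≤ dw x := by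
    intro x; rw [hdw]; dsimp only; split
    · exact mul_nonneg (pow_nonneg hlam0.le _) (Finset.prod_nonneg fun i _ => hν0 i _)
    · exact le_refl 0
  -- Z and ZP
  set Z : Fin n → ℝ := fun i => ∑' y : ℕ, lam ^ y * ν i y with hZdef
  have hZ0 : ∀ i : Fin n, 0 < Z i := by
    intro i
    have hexists : ∃ y, ν i y ≠ 0 := by
      by_contra hall
      push_neg at hall
      have h0 : HasSum (ν (i:ℕ)) 0 := by
        have he : ν (i:ℕ) = fun _ => 0 := funext hall
        rw [he]; exact hasSum_zero
      exact one_ne_zero ((hν1 i).unique h0)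
    obtain ⟨y, hy⟩ := hexists
    have hν00 : 0 < ν i 0 := (hlc i).2.1 0 y (Nat.zero_le y)
      (lt_of_le_of_ne (hν0 i y) (Ne.symm hy))
    have hle : lam ^ 0 * ν i 0 ≤ Z i := by
      rw [hZdef]
      exact Summable.le_tsum (hZ i) 0 fun j _ => mul_nonneg (pow_nonneg hlam0.le j) (hν0 i j)
    have h00 : (0:ℝ) < lam ^ 0 * ν i 0 := by simpa using hν00
    exact lt_of_lt_of_le h00 hle
  set ZP : ℝ := ∏ i : Fin n, Z i with hZP
  have hZPpos : 0 < ZP := Finset.prod_pos fun i _ => hZ0 i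
  have tiltprod : ∀ x : Fin n → ℕ, (∏ i : Fin n, tilt (ν i) lam (x i))
      = (lam ^ (∑ i, x i) * ∏ i : Fin n, ν i (x i)) * ZP⁻¹ := by
    intro x
    unfold tilt
    rw [Finset.prod_div_distrib, Finset.prod_mul_distrib, Finset.prod_pow_eq_pow_sum,
      div_eq_mul_inv]
  have hdLw : ∀ x, dL x = dw x * ZP⁻¹ := by
    intro x
    rw [hdL, hdw]; dsimp only
    split_ifs with h
    · exact tiltprod x
    · rw [zero_mul]
  -- the F function
  set Fx : (Fin n → ℕ) → ℝ := fun x => f (fun i => x (Fin.castLE hln i)) + C with hFx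
  have hFx0 : ∀ x, 0 ≤ Fx x := by
    intro x
    have := abs_le.mp (hC (fun i => x (Fin.castLE hln i)))
    rw [hFx]; dsimp only; linarith [this.1]
  have hFxc : ∀ x, Fx x ≤ 2*C := by
    intro x
    have := abs_le.mp (hC (fun i => x (Fin.castLE hln i)))
    rw [hFx]; dsimp only; linarith [this.2]
  have hFxmono : Monotone Fx := by
    intro x y hxy
    rw [hFx]; dsimp only
    have hle : (fun i => x (Fin.castLE hln i)) ≤ (fun i => y (Fin.castLE hln i)) :=
      fun i => hxy _
    linarith [hf hle]
  set aa : ℕ → ℝ := fun s => GCP.lineSum n νn Fx s with haa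
  set bb : ℕ → ℝ := fun s => GCP.lineSum n νn (fun _ => 1) s with hbb
  have haa0 : ∀ s, 0 ≤ aa s := fun s => GCP.lineSum_nonneg hν0 hFx0 s
  have hbb0 : ∀ s, 0 ≤ bb s := fun s => GCP.lineSum_nonneg hν0 (fun _ => zero_le_one) s
  have habchain : ∀ s t : ℕ, s ≤ t → aa s * bb t ≤ aa t * bb s :=
    GCP.efron_chain n νn hLCi Fx hFxmono hFx0
  -- ENNReal quantities
  set lam' : ENNReal := ENNReal.ofReal lam with hlam'
  set I : ℕ → ENNReal := fun s => if R < (s:ℝ) then 1 else 0 with hI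
  have hprod1 : (∑' x : Fin n → ℕ, ∏ i : Fin n, ENNReal.ofReal (νn i (x i))) = 1 := by
    rw [GCP.tsum_pi_prod n (fun i y => ENNReal.ofReal (νn i y))]
    have hz : ∀ i : Fin n, (∑' y : ℕ, ENNReal.ofReal (νn i y)) = 1 := by
      intro i
      rw [← ENNReal.ofReal_tsum_of_nonneg (fun y => hν0 i y) (hν1 i).summable,
        (hν1 i).tsum_eq, ENNReal.ofReal_one]
    rw [Finset.prod_congr rfl fun i _ => hz i, Finset.prod_const_one]
  have hdνfin : (∑' x : Fin n → ℕ, ENNReal.ofReal (dν x)) ≠ ⊤ := by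
    have hle : ∀ x : Fin n → ℕ,
        ENNReal.ofReal (dν x) ≤ ∏ i : Fin n, ENNReal.ofReal (νn i (x i)) := by
      intro x; rw [hdν]; dsimp only; split
      · rw [ENNReal.ofReal_prod_of_nonneg (fun i _ => hν0 i _)]
      · simp
    refine ne_top_of_le_ne_top (by rw [hprod1]; exact ENNReal.one_ne_top)
      (ENNReal.tsum_le_tsum hle)
  have hZE : ∀ i : Fin n, (∑' y : ℕ, lam' ^ y * ENNReal.ofReal (νn i y))
      = ENNReal.ofReal (Z i) := by
    intro i
    rw [hZdef]
    rw [ENNReal.ofReal_tsum_of_nonneg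
      (fun y => mul_nonneg (pow_nonneg hlam0.le y) (hν0 i y)) (hZ i)]
    refine tsum_congr fun y => ?_
    rw [ENNReal.ofReal_mul (pow_nonneg hlam0.le y), ENNReal.ofReal_pow hlam0.le, hlam']
  have hdwfin : (∑' x : Fin n → ℕ, ENNReal.ofReal (dw x)) ≠ ⊤ := by
    have hle : ∀ x : Fin n → ℕ, ENNReal.ofReal (dw x)
        ≤ ∏ i : Fin n, (lam' ^ (x i) * ENNReal.ofReal (νn i (x i))) := by
      intro x; rw [hdw]; dsimp only; split
      · rw [Finset.prod_mul_distrib, Finset.prod_pow_eq_pow_sum,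
          ENNReal.ofReal_mul (pow_nonneg hlam0.le _), ENNReal.ofReal_pow hlam0.le,
          ENNReal.ofReal_prod_of_nonneg (fun i _ => hν0 i _), hlam']
      · simp
    have htot : (∑' x : Fin n → ℕ,
        ∏ i : Fin n, (lam' ^ (x i) * ENNReal.ofReal (νn i (x i)))) ≠ ⊤ := by
      rw [GCP.tsum_pi_prod n (fun i y => lam' ^ y * ENNReal.ofReal (νn i y)),
        Finset.prod_congr rfl fun i _ => hZE i]
      exact ENNReal.prod_ne_top fun i _ => ENNReal.ofReal_ne_top
    exact ne_top_of_le_ne_top htot (ENNReal.tsum_le_tsum hle)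
  have hdLfin : (∑' x : Fin n → ℕ, ENNReal.ofReal (dL x)) ≠ ⊤ := by
    have he : ∀ x, ENNReal.ofReal (dL x)
        = ENNReal.ofReal (dw x) * ENNReal.ofReal (ZP⁻¹) := by
      intro x; rw [hdLw x, ENNReal.ofReal_mul (hdw0 x)]
    rw [tsum_congr he, ENNReal.tsum_mul_right]
    exact ENNReal.mul_ne_top hdwfin ENNReal.ofReal_ne_top
  -- level identifications
  have hE1 : (∑' x : Fin n → ℕ, ENNReal.ofReal (dν x))
      = ∑' s : ℕ, I s * ENNReal.ofReal (bb s) := by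
    have h1 : (∑' x : Fin n → ℕ, ENNReal.ofReal (dν x))
        = ∑' x : Fin n → ℕ, I (∑ i, x i)
            * ENNReal.ofReal (1 * ∏ i : Fin n, νn i (x i)) := by
      refine tsum_congr fun x => ?_
      rw [hdν, hI]; dsimp only
      split_ifs with h
      · rw [one_mul, one_mul]
      · rw [zero_mul, ENNReal.ofReal_zero]
    rw [h1, GCP.levelDecomp (H := fun _ => (1:ℝ)) hν0 (fun _ => zero_le_one) I]
  have hE2 : (∑' x : Fin n → ℕ, ENNReal.ofReal (Fx x * dν x))
      = ∑' s : ℕ, I s * ENNReal.ofReal (aa s) := by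
    have h1 : (∑' x : Fin n → ℕ, ENNReal.ofReal (Fx x * dν x))
        = ∑' x : Fin n → ℕ, I (∑ i, x i)
            * ENNReal.ofReal (Fx x * ∏ i : Fin n, νn i (x i)) := by
      refine tsum_congr fun x => ?_
      rw [hdν, hI]; dsimp only
      split_ifs with h
      · rw [one_mul]
      · rw [mul_zero, ENNReal.ofReal_zero, zero_mul]
    rw [h1, GCP.levelDecomp (H := Fx) hν0 hFx0 I]
  have hE3 : (∑' x : Fin n → ℕ, ENNReal.ofReal (dw x))
      = ∑' s : ℕ, (I s * lam' ^ s) * ENNReal.ofReal (bb s) := by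
    have h1 : (∑' x : Fin n → ℕ, ENNReal.ofReal (dw x))
        = ∑' x : Fin n → ℕ, (I (∑ i, x i) * lam' ^ (∑ i, x i))
            * ENNReal.ofReal (1 * ∏ i : Fin n, νn i (x i)) := by
      refine tsum_congr fun x => ?_
      rw [hdw, hI]; dsimp only
      split_ifs with h
      · rw [one_mul, one_mul, ENNReal.ofReal_mul (pow_nonneg hlam0.le _),
          ENNReal.ofReal_pow hlam0.le, hlam']
      · rw [zero_mul, zero_mul, ENNReal.ofReal_zero]
    rw [h1, GCP.levelDecomp (H := fun _ => (1:ℝ)) hν0 (fun _ => zero_le_one)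
      (fun s => I s * lam' ^ s)]
  have hE4 : (∑' x : Fin n → ℕ, ENNReal.ofReal (Fx x * dw x))
      = ∑' s : ℕ, (I s * lam' ^ s) * ENNReal.ofReal (aa s) := by
    have h1 : (∑' x : Fin n → ℕ, ENNReal.ofReal (Fx x * dw x))
        = ∑' x : Fin n → ℕ, (I (∑ i, x i) * lam' ^ (∑ i, x i))
            * ENNReal.ofReal (Fx x * ∏ i : Fin n, νn i (x i)) := by
      refine tsum_congr fun x => ?_
      rw [hdw, hI]; dsimp only
      split_ifs with h
      · rw [one_mul]
        have hre : Fx x * (lam ^ (∑ i, x i) * ∏ i : Fin n, νn i (x i))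
            = lam ^ (∑ i, x i) * (Fx x * ∏ i : Fin n, νn i (x i)) := by ring
        rw [hre, ENNReal.ofReal_mul (pow_nonneg hlam0.le _),
          ENNReal.ofReal_pow hlam0.le, hlam']
      · rw [mul_zero, ENNReal.ofReal_zero, zero_mul, zero_mul]
    rw [h1, GCP.levelDecomp (H := Fx) hν0 hFx0 (fun s => I s * lam' ^ s)]
  -- finiteness of F-weighted sums
  have hFxdνfin : (∑' x : Fin n → ℕ, ENNReal.ofReal (Fx x * dν x)) ≠ ⊤ := by
    have hble : ∀ x : Fin n → ℕ, ENNReal.ofReal (Fx x * dν x)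
        ≤ ENNReal.ofReal (2*C) * ENNReal.ofReal (dν x) := by
      intro x
      rw [← ENNReal.ofReal_mul (by linarith : (0:ℝ) ≤ 2*C)]
      exact ENNReal.ofReal_le_ofReal (mul_le_mul_of_nonneg_right (hFxc x) (hdν0 x))
    have hcalc : (∑' x : Fin n → ℕ, ENNReal.ofReal (Fx x * dν x))
        ≤ ENNReal.ofReal (2*C) * ∑' x : Fin n → ℕ, ENNReal.ofReal (dν x) := by
      calc (∑' x : Fin n → ℕ, ENNReal.ofReal (Fx x * dν x))
          ≤ ∑' x : Fin n → ℕ, ENNReal.ofReal (2*C) * ENNReal.ofReal (dν x) :=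
            ENNReal.tsum_le_tsum hble
        _ = _ := ENNReal.tsum_mul_left
    exact ne_top_of_le_ne_top (ENNReal.mul_ne_top ENNReal.ofReal_ne_top hdνfin) hcalc
  have hFxdwfin : (∑' x : Fin n → ℕ, ENNReal.ofReal (Fx x * dw x)) ≠ ⊤ := by
    have hble : ∀ x : Fin n → ℕ, ENNReal.ofReal (Fx x * dw x)
        ≤ ENNReal.ofReal (2*C) * ENNReal.ofReal (dw x) := by
      intro x
      rw [← ENNReal.ofReal_mul (by linarith : (0:ℝ) ≤ 2*C)]
      exact ENNReal.ofReal_le_ofReal (mul_le_mul_of_nonneg_right (hFxc x) (hdw0 x))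
    have hcalc : (∑' x : Fin n → ℕ, ENNReal.ofReal (Fx x * dw x))
        ≤ ENNReal.ofReal (2*C) * ∑' x : Fin n → ℕ, ENNReal.ofReal (dw x) := by
      calc (∑' x : Fin n → ℕ, ENNReal.ofReal (Fx x * dw x))
          ≤ ∑' x : Fin n → ℕ, ENNReal.ofReal (2*C) * ENNReal.ofReal (dw x) :=
            ENNReal.tsum_le_tsum hble
        _ = _ := ENNReal.tsum_mul_left
    exact ne_top_of_le_ne_top (ENNReal.mul_ne_top ENNReal.ofReal_ne_top hdwfin) hcalc
  -- Chebyshev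
  set u : ℕ → ENNReal := fun s => I s * ENNReal.ofReal (aa s) with hu
  set vv : ℕ → ENNReal := fun s => I s * ENNReal.ofReal (bb s) with hvv
  have hcross : ∀ s t : ℕ, s ≤ t → u s * vv t ≤ u t * vv s := by
    intro s t hst
    rw [hu, hvv]; dsimp only
    have habE : ENNReal.ofReal (aa s) * ENNReal.ofReal (bb t)
        ≤ ENNReal.ofReal (aa t) * ENNReal.ofReal (bb s) := by
      rw [← ENNReal.ofReal_mul (haa0 s), ← ENNReal.ofReal_mul (haa0 t)]
      exact ENNReal.ofReal_le_ofReal (habchain s t hst)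
    calc I s * ENNReal.ofReal (aa s) * (I t * ENNReal.ofReal (bb t))
        = (I s * I t) * (ENNReal.ofReal (aa s) * ENNReal.ofReal (bb t)) := by ring
      _ ≤ (I s * I t) * (ENNReal.ofReal (aa t) * ENNReal.ofReal (bb s)) :=
          mul_le_mul_right habE _
      _ = I t * ENNReal.ofReal (aa t) * (I s * ENNReal.ofReal (bb s)) := by ring
  have hmain := GCP.cheb u vv lam'
    (by rw [hlam']; exact ENNReal.one_le_ofReal.mpr hlam1.le)
    (by rw [hlam']; exact ENNReal.ofReal_ne_top) hcross
  -- identify the four sums of hmain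
  have hNR_E : ENNReal.ofReal (∑' x : Fin n → ℕ, Fx x * dν x) = ∑' s : ℕ, u s := by
    rw [GCP.tsum_ofReal_eq (fun x => mul_nonneg (hFx0 x) (hdν0 x)) hFxdνfin, hE2]
  have hDR_E : ENNReal.ofReal (∑' x : Fin n → ℕ, dν x) = ∑' t : ℕ, vv t := by
    rw [GCP.tsum_ofReal_eq hdν0 hdνfin, hE1]
  have hTD_E : ENNReal.ofReal (∑' x : Fin n → ℕ, dw x) = ∑' t : ℕ, lam' ^ t * vv t := by
    rw [GCP.tsum_ofReal_eq hdw0 hdwfin, hE3]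
    refine tsum_congr fun t => ?_
    rw [hvv]; dsimp only; ring
  have hTF_E : ENNReal.ofReal (∑' x : Fin n → ℕ, Fx x * dw x)
      = ∑' s : ℕ, lam' ^ s * u s := by
    rw [GCP.tsum_ofReal_eq (fun x => mul_nonneg (hFx0 x) (hdw0 x)) hFxdwfin, hE4]
    refine tsum_congr fun s => ?_
    rw [hu]; dsimp only; ring
  rw [← hNR_E, ← hDR_E, ← hTD_E, ← hTF_E, ← ENNReal.ofReal_mul
      (tsum_nonneg fun x => mul_nonneg (hFx0 x) (hdν0 x)),
    ← ENNReal.ofReal_mul (tsum_nonneg fun x => mul_nonneg (hFx0 x) (hdw0 x))] at hmain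
  have hreal : (∑' x : Fin n → ℕ, Fx x * dν x) * (∑' x : Fin n → ℕ, dw x)
      ≤ (∑' x : Fin n → ℕ, Fx x * dw x) * (∑' x : Fin n → ℕ, dν x) :=
    (ENNReal.ofReal_le_ofReal_iff (mul_nonneg
      (tsum_nonneg fun x => mul_nonneg (hFx0 x) (hdw0 x)) (tsum_nonneg hdν0))).mp hmain
  -- positivity of TD
  have hDLeq : (∑' x : Fin n → ℕ, dL x) = (∑' x : Fin n → ℕ, dw x) * ZP⁻¹ := by
    rw [tsum_congr hdLw, tsum_mul_right]
  have hTDpos : 0 < ∑' x : Fin n → ℕ, dw x := by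
    have h' : 0 < (∑' x : Fin n → ℕ, dw x) * ZP⁻¹ := by rw [← hDLeq]; exact hpos'
    nlinarith [inv_pos.mpr hZPpos, (tsum_nonneg hdw0 : 0 ≤ ∑' x : Fin n → ℕ, dw x)]
  -- conditional reductions
  have hred1 := GCP.cond_reduce' hln dν hdν0 hdνfin hpos f C hC
  have hred2 := GCP.cond_reduce' hln dL hdL0 hdLfin hpos' f C hC
  have hcondν : ∀ w : Fin ℓ → ℕ, condMarginal ν ℓ n hln R w
      = (∑' x : Fin n → ℕ,
          if (∀ i : Fin ℓ, x (Fin.castLE hln i) = w i) then dν x else 0)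
        / (∑' x : Fin n → ℕ, dν x) := by
    intro w
    unfold condMarginal
    congr 1
    · refine tsum_congr fun x => ?_
      rw [hdν]; dsimp only
      by_cases hP : (∀ i : Fin ℓ, x (Fin.castLE hln i) = w i)
      · by_cases hA : R < ((∑ i, x i : ℕ) : ℝ)
        · rw [if_pos ⟨hP, hA⟩, if_pos hP, if_pos hA]
        · rw [if_neg (fun hc => hA hc.2), if_pos hP, if_neg hA]
      · rw [if_neg (fun hc => hP hc.1), if_neg hP]
  have hcondL : ∀ w : Fin ℓ → ℕ, condMarginal (fun i => tilt (ν i) lam) ℓ n hln R w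
      = (∑' x : Fin n → ℕ,
          if (∀ i : Fin ℓ, x (Fin.castLE hln i) = w i) then dL x else 0)
        / (∑' x : Fin n → ℕ, dL x) := by
    intro w
    unfold condMarginal
    congr 1
    · refine tsum_congr fun x => ?_
      rw [hdL]; dsimp only
      by_cases hP : (∀ i : Fin ℓ, x (Fin.castLE hln i) = w i)
      · by_cases hA : R < ((∑ i, x i : ℕ) : ℝ)
        · rw [if_pos ⟨hP, hA⟩, if_pos hP, if_pos hA]
        · rw [if_neg (fun hc => hA hc.2), if_pos hP, if_neg hA]
      · rw [if_neg (fun hc => hP hc.1), if_neg hP]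
  have e1 : (∑' w : Fin ℓ → ℕ, f w * condMarginal ν ℓ n hln R w)
      = (∑' x : Fin n → ℕ, Fx x * dν x) / (∑' x : Fin n → ℕ, dν x) - C := by
    rw [tsum_congr fun w => by rw [hcondν w]]
    exact hred1
  have e2 : (∑' w : Fin ℓ → ℕ, f w * condMarginal (fun i => tilt (ν i) lam) ℓ n hln R w)
      = (∑' x : Fin n → ℕ, Fx x * dw x) / (∑' x : Fin n → ℕ, dw x) - C := by
    rw [tsum_congr fun w => by rw [hcondL w]]
    rw [hred2]
    have h1 : (∑' x : Fin n → ℕ, Fx x * dL x)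
        = (∑' x : Fin n → ℕ, Fx x * dw x) * ZP⁻¹ := by
      have hpt : ∀ x, Fx x * dL x = (Fx x * dw x) * ZP⁻¹ := by
        intro x; rw [hdLw x]; ring
      rw [tsum_congr hpt, tsum_mul_right]
    have h2 : (∑' x : Fin n → ℕ, (f (fun i => x (Fin.castLE hln i)) + C) * dL x)
        = ∑' x : Fin n → ℕ, Fx x * dL x := rfl
    rw [h2, h1, hDLeq, mul_div_mul_right _ _ (ne_of_gt (inv_pos.mpr hZPpos))]
  rw [e1, e2]
  have hdivle : (∑' x : Fin n → ℕ, Fx x * dν x) / (∑' x : Fin n → ℕ, dν x)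
      ≤ (∑' x : Fin n → ℕ, Fx x * dw x) / (∑' x : Fin n → ℕ, dw x) := by
    rw [div_le_div_iff₀ hpos hTDpos]
    exact hreal
  linarith
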